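/- arXiv:2111.02702 — 5 statements merged into one kernel-verified Lean document; each statement's English description precedes it below -/
import Mathlib

section
/- Let $Y_1,\dots,Y_M$ be independent real random variables with $\mathbb{E}[Y_i]=1$ and $\mathrm{Var}[Y_i]<\infty$ for each $i$, and set $S_M=\sum_{i=1}^M Y_i$. Then for any $a,b>0$, $\mathbb{E}[(a+bS_M)^{-1}] \le (a+bM/2)^{-1} + (4/a)\,\mathrm{Var}[S_M]/M^2$. -/
open MeasureTheory ProbabilityTheory

theorem stmt_0 {Ω : Type*} [MeasurableSpace Ω] (μ : Measure Ω) [IsProbabilityMeasure μ]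
    (M : ℕ) (Y : Fin M → Ω → ℝ)
    (hIndep : iIndepFun Y μ)
    (hmeas : ∀ i, Measurable (Y i))
    (hL2 : ∀ i, MemLp (Y i) 2 μ)
    (hmean : ∀ i, μ[Y i] = 1)
    (hnonneg : ∀ i, ∀ᵐ ω ∂μ, 0 ≤ Y i ω)
    (a b : ℝ) (ha : 0 < a) (hb : 0 < b) :
    μ[fun ω => (a + b * ∑ i, Y i ω)⁻¹] ≤
      (a + b * M / 2)⁻¹ +
        (4 / a) * variance (fun ω => ∑ i, Y i ω) μ / (M : ℝ) ^ 2 := by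
  rcases Nat.eq_zero_or_pos M with hM | hM
  · subst hM
    simp [integral_const]
  set S : Ω → ℝ := fun ω => ∑ i, Y i ω with hSdef
  have hMpos : (0:ℝ) < M := by exact_mod_cast hM
  have hSmeas : Measurable S := Finset.measurable_sum _ fun i _ => hmeas i
  have hSnn : ∀ᵐ ω ∂μ, 0 ≤ S ω := by
    have := ae_all_iff.2 hnonneg
    filter_upwards [this] with ω hω
    exact Finset.sum_nonneg fun i _ => hω i
  have hSL2 : MemLp S 2 μ := by
    have h := memLp_finset_sum' (μ := μ) (p := 2) Finset.univ (fun i (_ : i ∈ Finset.univ) => hL2 i)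
    convert h using 1
    funext ω
    simp [hSdef]
  have hES : (∫ ω, S ω ∂μ) = (M : ℝ) := by
    simp only [hSdef]
    rw [integral_finset_sum _ fun i _ => (hL2 i).integrable one_le_two]
    simp [hmean]
  -- the event A = {S < M/2}
  set A : Set Ω := {ω | S ω < M / 2} with hAdef
  have hAmeas : MeasurableSet A := measurableSet_lt hSmeas measurable_const
  -- pointwise bound
  have hbound : ∀ᵐ ω ∂μ, (a + b * S ω)⁻¹ ≤
      (a + b * M / 2)⁻¹ + A.indicator (fun _ => a⁻¹) ω := by
    filter_upwards [hSnn] with ω hω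
    by_cases hA : ω ∈ A
    · have h1 : a ≤ a + b * S ω := by nlinarith
      rw [Set.indicator_of_mem hA]
      have : (a + b * S ω)⁻¹ ≤ a⁻¹ :=
        inv_anti₀ ha h1
      have h2 : (0:ℝ) ≤ (a + b * M / 2)⁻¹ := by positivity
      linarith
    · have hA' : (M:ℝ) / 2 ≤ S ω := le_of_not_gt hA
      rw [Set.indicator_of_notMem hA]
      have h1 : a + b * M / 2 ≤ a + b * S ω := by nlinarith
      have := inv_anti₀ (by positivity) h1
      linarith
  have hf_int : Integrable (fun ω => (a + b * S ω)⁻¹) μ := by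
    refine Integrable.mono' (integrable_const a⁻¹)
      ((hSmeas.const_mul b).const_add a).inv.aestronglyMeasurable ?_
    filter_upwards [hSnn] with ω hω
    rw [Real.norm_eq_abs, abs_of_nonneg (by positivity)]
    exact inv_anti₀ ha (by nlinarith)
  have hg_int : Integrable (fun ω => (a + b * M / 2)⁻¹ + A.indicator (fun _ => a⁻¹) ω) μ :=
    (integrable_const _).add ((integrable_const _).indicator hAmeas)
  have hInt_le : μ[fun ω => (a + b * S ω)⁻¹] ≤
      (a + b * M / 2)⁻¹ + (μ A).toReal * a⁻¹ := by
    calc μ[fun ω => (a + b * S ω)⁻¹]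
        ≤ ∫ ω, ((a + b * M / 2)⁻¹ + A.indicator (fun _ => a⁻¹) ω) ∂μ :=
          integral_mono_ae hf_int hg_int hbound
      _ = (a + b * M / 2)⁻¹ + (μ A).toReal * a⁻¹ := by
          rw [integral_add (integrable_const _) ((integrable_const _).indicator hAmeas),
            integral_const, integral_indicator_const _ hAmeas]
          simp [smul_eq_mul, Measure.real]
  -- Chebyshev
  have hcheb : μ A ≤ ENNReal.ofReal (variance S μ / ((M:ℝ) / 2) ^ 2) := by
    refine le_trans (measure_mono ?_) (meas_ge_le_variance_div_sq hSL2 (by positivity))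
    intro ω hω
    have hω' : S ω < M / 2 := hω
    simp only [Set.mem_setOf_eq]
    rw [hES]
    exact le_abs.2 (Or.inr (by linarith))
  have hvar : 0 ≤ variance S μ := variance_nonneg _ _
  have hcheb' : (μ A).toReal ≤ variance S μ / ((M:ℝ) / 2) ^ 2 :=
    ENNReal.toReal_le_of_le_ofReal (by positivity) hcheb
  have hfin : (a + b * M / 2)⁻¹ + (μ A).toReal * a⁻¹ ≤
      (a + b * M / 2)⁻¹ + (4 / a) * variance S μ / (M : ℝ) ^ 2 := by
    have heq : variance S μ / ((M:ℝ) / 2) ^ 2 * a⁻¹ = (4 / a) * variance S μ / (M : ℝ) ^ 2 := by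
      field_simp
      ring
    have : (μ A).toReal * a⁻¹ ≤ variance S μ / ((M:ℝ) / 2) ^ 2 * a⁻¹ := by
      apply mul_le_mul_of_nonneg_right hcheb' (by positivity)
    linarith [heq ▸ this]
  exact hInt_le.trans hfin
end

section
/- Let $\pi$ and $\lambda$ be probability measures on a measurable space $(\mathbb{X},\mathcal{X})$ with $\pi \ll \lambda$ and weight function $w = d\pi/d\lambda$ satisfying $w(x) \le L$ for all $x$ and some constant $L \ge 1$. Then the i-SIR Markov kernel $P_N(x,A) = \int \delta_x(dx^1) \sum_{i=1}^N \frac{w(x^i)}{\sum_{j=1}^N w(x^j)} \mathbf{1}_A(x^i) \prod_{j=2}^N \lambda(dx^j)$ satisfies the minorization $P_N(x,A) \ge \epsilon_N \pi(A)$ for all $x$ and measurable $A$, where $\epsilon_N = (N-1)/(2L+N-2)$. -/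
open MeasureTheory

lemma harmonic_jensen {α : Type*} [MeasurableSpace α] (μ : Measure α) [IsProbabilityMeasure μ]
    (f : α → ℝ) (hf : Measurable f) (a b : ℝ) (ha : 0 < a)
    (hfa : ∀ x, a ≤ f x) (hfb : ∀ x, f x ≤ b) :
    (∫ x, f x ∂μ)⁻¹ ≤ ∫ x, (f x)⁻¹ ∂μ := by
  have hfpos : ∀ x, 0 < f x := fun x => lt_of_lt_of_le ha (hfa x)
  have hint_f : Integrable f μ := by
    refine (integrable_const b).mono' hf.aestronglyMeasurable ?_
    filter_upwards with x
    rw [Real.norm_eq_abs, abs_of_pos (hfpos x)]; exact hfb x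
  have hint_inv : Integrable (fun x => (f x)⁻¹) μ := by
    refine (integrable_const a⁻¹).mono' hf.inv.aestronglyMeasurable ?_
    filter_upwards with x
    rw [Real.norm_eq_abs, abs_of_pos (inv_pos.2 (hfpos x))]
    exact inv_anti₀ ha (hfa x)
  set If := ∫ x, f x ∂μ with hIf
  set Ii := ∫ x, (f x)⁻¹ ∂μ with hIi
  have hIfpos : 0 < If := by
    have : a ≤ If := by
      calc a = ∫ _ : α, a ∂μ := by simp
        _ ≤ If := integral_mono (integrable_const a) hint_f hfa
    linarith
  have key : 1 ≤ If * Ii := by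
    have hpt : ∀ y, 1 ≤ (If * (f y)⁻¹ + f y * Ii) / 2 := by
      intro y
      have heval : ∫ z, (f z * (f y)⁻¹ + f y * (f z)⁻¹) / 2 ∂μ
          = (If * (f y)⁻¹ + f y * Ii) / 2 := by
        rw [integral_div, integral_add (hint_f.mul_const _) (hint_inv.const_mul _),
          integral_mul_const, integral_const_mul]
      rw [← heval]
      have h1 : (1 : ℝ) = ∫ _ : α, (1 : ℝ) ∂μ := by simp
      rw [h1]
      refine integral_mono (integrable_const 1)
        (((hint_f.mul_const _).add (hint_inv.const_mul _)).div_const 2) (fun z => ?_)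
      have hy := hfpos y
      have hz := hfpos z
      rw [le_div_iff₀ (by norm_num : (0:ℝ) < 2)]
      have h2 : 0 < f z * f y := mul_pos hz hy
      have expand : f z * (f y)⁻¹ + f y * (f z)⁻¹ = (f z^2 + f y^2) / (f z * f y) := by
        field_simp
      rw [expand, le_div_iff₀ h2]
      nlinarith [sq_nonneg (f z - f y)]
    have houter : ∫ y, (If * (f y)⁻¹ + f y * Ii) / 2 ∂μ = If * Ii := by
      rw [integral_div, integral_add (hint_inv.const_mul _) (hint_f.mul_const _),
        integral_mul_const, integral_const_mul]
      ring
    calc (1:ℝ) = ∫ _ : α, (1:ℝ) ∂μ := by simp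
      _ ≤ ∫ y, (If * (f y)⁻¹ + f y * Ii) / 2 ∂μ := integral_mono (integrable_const 1)
          (((hint_inv.const_mul _).add (hint_f.mul_const _)).div_const 2) hpt
      _ = If * Ii := houter
  calc If⁻¹ ≤ If⁻¹ * (If * Ii) := le_mul_of_one_le_right (inv_pos.2 hIfpos).le key
    _ = Ii := by field_simp

lemma pi_marginal {X : Type*} [MeasurableSpace X] (lam : Measure X) [IsProbabilityMeasure lam]
    (w : X → ℝ) (k : ℕ) (j : Fin k) :
    ∫ z : Fin k → X, w (z j) ∂(Measure.pi fun _ => lam) = ∫ t, w t ∂lam := by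
  cases k with
  | zero => exact j.elim0
  | succ n =>
    have hmp := measurePreserving_piFinSuccAbove (fun _ : Fin (n+1) => lam) j
    have h := hmp.integral_comp
      (MeasurableEquiv.piFinSuccAbove (fun _ : Fin (n+1) => X) j).measurableEmbedding
      (fun p : X × (Fin n → X) => w p.1)
    rw [show (fun y : Fin (n+1) → X =>
        (fun p : X × (Fin n → X) => w p.1)
          (MeasurableEquiv.piFinSuccAbove (fun _ : Fin (n+1) => X) j y)) = fun y => w (y j)
      from rfl] at h
    rw [h]
    have := integral_prod_mul (μ := lam) (ν := Measure.pi fun _ : Fin n => lam)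
      (f := w) (g := fun _ => (1:ℝ))
    simpa using this

/-- The i-SIR Markov kernel: the current state `x` is kept as the first particle,
`N - 1` fresh particles are drawn i.i.d. from the proposal `lam`, and one particle is
selected with probability proportional to its weight. -/
noncomputable def isirP {X : Type*} [MeasurableSpace X] (lam : Measure X) (w : X → ℝ)
    (N : ℕ) (x : X) (A : Set X) : ℝ :=
  ∫ y : Fin (N - 1) → X,
    (w x * A.indicator (fun _ => (1 : ℝ)) x + ∑ i, w (y i) * A.indicator (fun _ => (1 : ℝ)) (y i)) /
      (w x + ∑ i, w (y i)) ∂(Measure.pi fun _ => lam)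

theorem stmt_3 {X : Type*} [MeasurableSpace X] (lam π : Measure X)
    [IsProbabilityMeasure lam] [IsProbabilityMeasure π]
    (w : X → ℝ) (hw_meas : Measurable w) (hw_nonneg : ∀ x, 0 ≤ w x)
    (L : ℝ) (hL : 1 ≤ L) (hw_bdd : ∀ x, w x ≤ L)
    (hπ : ∀ s : Set X, MeasurableSet s → (π s).toReal = ∫ x in s, w x ∂lam)
    (N : ℕ) (hN : 2 ≤ N) (x : X) (A : Set X) (hA : MeasurableSet A) :
    ((N : ℝ) - 1) / (2 * L + (N : ℝ) - 2) * (π A).toReal ≤ isirP lam w N x A := by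
  obtain ⟨m, rfl⟩ : ∃ m, N = m + 2 := ⟨N - 2, by omega⟩
  clear hN
  have hLpos : (0:ℝ) < L := lt_of_lt_of_le one_pos hL
  set ind : X → ℝ := A.indicator (fun _ => (1:ℝ)) with hind
  have hind_meas : Measurable ind := measurable_const.indicator hA
  have hind_nonneg : ∀ t, 0 ≤ ind t := by
    intro t; by_cases h : t ∈ A <;> simp [hind, h]
  have hind_le_one : ∀ t, ind t ≤ 1 := by
    intro t; by_cases h : t ∈ A <;> simp [hind, h]
  have hn_nonneg : ∀ t, 0 ≤ w t * ind t := fun t => mul_nonneg (hw_nonneg t) (hind_nonneg t)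
  have hn_le_w : ∀ t, w t * ind t ≤ w t :=
    fun t => mul_le_of_le_one_right (hw_nonneg t) (hind_le_one t)
  have hn_meas : Measurable fun t => w t * ind t := hw_meas.mul hind_meas
  set μM : Measure (Fin (m+1) → X) := Measure.pi fun _ => lam with hμM
  set μm : Measure (Fin m → X) := Measure.pi fun _ => lam with hμm
  set F : (Fin (m+1) → X) → ℝ := fun y =>
    (w x * ind x + ∑ i, w (y i) * ind (y i)) / (w x + ∑ i, w (y i)) with hF
  set G : Fin (m+1) → (Fin (m+1) → X) → ℝ := fun i y =>
    w (y i) * ind (y i) * (2*L + ∑ j : Fin m, w (y (i.succAbove j)))⁻¹ with hG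
  have hisir : isirP lam w (m+2) x A = ∫ y, F y ∂μM := by rw [hF]; rfl
  -- measurability and integrability
  have hF_meas : Measurable F := by
    rw [hF]
    exact (measurable_const.add (Finset.measurable_sum _ fun i _ =>
        hn_meas.comp (measurable_pi_apply i))).div
      (measurable_const.add (Finset.measurable_sum _ fun i _ =>
        hw_meas.comp (measurable_pi_apply i)))
  have hF_bdd : ∀ y, 0 ≤ F y ∧ F y ≤ 1 := by
    intro y
    rw [hF]
    have hD : 0 ≤ w x + ∑ i, w (y i) :=
      add_nonneg (hw_nonneg x) (Finset.sum_nonneg fun i _ => hw_nonneg _)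
    have hnum0 : 0 ≤ w x * ind x + ∑ i, w (y i) * ind (y i) :=
      add_nonneg (hn_nonneg x) (Finset.sum_nonneg fun i _ => hn_nonneg _)
    have hnum : w x * ind x + ∑ i, w (y i) * ind (y i) ≤ w x + ∑ i, w (y i) :=
      add_le_add (hn_le_w x) (Finset.sum_le_sum fun i _ => hn_le_w _)
    refine ⟨div_nonneg hnum0 hD, ?_⟩
    rcases eq_or_lt_of_le hD with hD0 | hDpos
    · have : w x * ind x + ∑ i, w (y i) * ind (y i) = 0 :=
        le_antisymm (hD0 ▸ hnum) hnum0
      simp [this]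
    · rw [div_le_one hDpos]; exact hnum
  have hF_int : Integrable F μM := by
    refine (integrable_const 1).mono' hF_meas.aestronglyMeasurable ?_
    filter_upwards with y
    rw [Real.norm_eq_abs, abs_of_nonneg (hF_bdd y).1]; exact (hF_bdd y).2
  have hG_meas : ∀ i, Measurable (G i) := by
    intro i
    rw [hG]
    exact (hn_meas.comp (measurable_pi_apply i)).mul
      ((measurable_const.add (Finset.measurable_sum _ fun j _ =>
        hw_meas.comp (measurable_pi_apply _))).inv)
  have hG_bdd : ∀ i y, 0 ≤ G i y ∧ G i y ≤ 1 := by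
    intro i y
    rw [hG]
    have hs : 0 ≤ ∑ j : Fin m, w (y (i.succAbove j)) :=
      Finset.sum_nonneg fun j _ => hw_nonneg _
    have hd : 0 < 2*L + ∑ j : Fin m, w (y (i.succAbove j)) := by linarith
    refine ⟨mul_nonneg (hn_nonneg _) (inv_nonneg.2 hd.le), ?_⟩
    have h1 : w (y i) * ind (y i) ≤ L := le_trans (hn_le_w _) (hw_bdd _)
    have h2 : (2*L + ∑ j : Fin m, w (y (i.succAbove j)))⁻¹ ≤ (2*L)⁻¹ :=
      inv_anti₀ (by linarith) (by linarith)
    calc w (y i) * ind (y i) * (2*L + ∑ j : Fin m, w (y (i.succAbove j)))⁻¹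
        ≤ L * (2*L)⁻¹ := mul_le_mul h1 h2 (inv_nonneg.2 hd.le) hLpos.le
      _ ≤ 1 := by rw [mul_inv_le_iff₀ (by linarith)]; linarith
  have hG_int : ∀ i, Integrable (G i) μM := by
    intro i
    refine (integrable_const 1).mono' (hG_meas i).aestronglyMeasurable ?_
    filter_upwards with y
    rw [Real.norm_eq_abs, abs_of_nonneg (hG_bdd i y).1]; exact (hG_bdd i y).2
  -- pointwise bound
  have hpt : ∀ y, ∑ i, G i y ≤ F y := by
    intro y
    have hD : 0 ≤ w x + ∑ i, w (y i) :=
      add_nonneg (hw_nonneg x) (Finset.sum_nonneg fun i _ => hw_nonneg _)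
    have hstep1 : ∀ i, G i y ≤ (w (y i) * ind (y i)) / (w x + ∑ k, w (y k)) := by
      intro i
      have hsplit : ∑ k, w (y k) = w (y i) + ∑ j : Fin m, w (y (i.succAbove j)) :=
        Fin.sum_univ_succAbove (fun k => w (y k)) i
      rcases eq_or_lt_of_le hD with hD0 | hDpos
      · have hwi : w (y i) ≤ w x + ∑ k, w (y k) :=
          le_add_of_nonneg_of_le (hw_nonneg x)
            (Finset.single_le_sum (f := fun k => w (y k)) (fun k _ => hw_nonneg _)
              (Finset.mem_univ i))
        have hwz : w (y i) = 0 := le_antisymm (hD0 ▸ hwi) (hw_nonneg _)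
        simp [hG, hwz]
      · have hDle : w x + ∑ k, w (y k) ≤ 2*L + ∑ j : Fin m, w (y (i.succAbove j)) := by
          rw [hsplit]
          have := hw_bdd x; have := hw_bdd (y i); linarith
        rw [hG, div_eq_mul_inv]
        exact mul_le_mul_of_nonneg_left (inv_anti₀ hDpos hDle) (hn_nonneg _)
    calc ∑ i, G i y ≤ ∑ i, (w (y i) * ind (y i)) / (w x + ∑ k, w (y k)) :=
          Finset.sum_le_sum fun i _ => hstep1 i
      _ = (∑ i, w (y i) * ind (y i)) / (w x + ∑ k, w (y k)) := (Finset.sum_div _ _ _).symm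
      _ ≤ (w x * ind x + ∑ i, w (y i) * ind (y i)) / (w x + ∑ k, w (y k)) := by
          rw [div_eq_mul_inv, div_eq_mul_inv]
          exact mul_le_mul_of_nonneg_right (le_add_of_nonneg_left (hn_nonneg x))
            (inv_nonneg.2 hD)
      _ = F y := by rw [hF]
  -- normalization of w
  have hw_one : ∫ t, w t ∂lam = 1 := by
    have h := hπ Set.univ MeasurableSet.univ
    rw [Measure.restrict_univ] at h
    simpa using h.symm
  -- the constant K
  set K : ℝ := ∫ z, (2*L + ∑ j : Fin m, w (z j))⁻¹ ∂μm with hK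
  set c : ℝ := 2*L + (m:ℝ) with hc
  have hm0 : (0:ℝ) ≤ m := Nat.cast_nonneg m
  have hcpos : 0 < c := by rw [hc]; linarith
  have hSm_meas : Measurable fun z : Fin m → X => 2*L + ∑ j, w (z j) :=
    measurable_const.add (Finset.measurable_sum _ fun j _ => hw_meas.comp (measurable_pi_apply j))
  have hint_sum : Integrable (fun z : Fin m → X => ∑ j, w (z j)) μm := by
    refine integrable_finset_sum _ fun j _ => ?_
    refine (integrable_const L).mono' (hw_meas.comp (measurable_pi_apply j)).aestronglyMeasurable ?_
    filter_upwards with z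
    rw [Real.norm_eq_abs, abs_of_nonneg (hw_nonneg _)]; exact hw_bdd _
  have hIj : ∀ j : Fin m, Integrable (fun z : Fin m → X => w (z j)) μm := by
    intro j
    refine (integrable_const L).mono' (hw_meas.comp (measurable_pi_apply j)).aestronglyMeasurable ?_
    filter_upwards with z
    rw [Real.norm_eq_abs, abs_of_nonneg (hw_nonneg _)]; exact hw_bdd _
  have hint_eval : ∫ z : Fin m → X, (2*L + ∑ j, w (z j)) ∂μm = c := by
    rw [integral_add (integrable_const _) hint_sum, integral_const, Measure.real, measure_univ,
      ENNReal.toReal_one, smul_eq_mul, one_mul,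
      integral_finset_sum _ (fun j _ => hIj j), hc]
    congr 1
    have hone : ∀ j : Fin m, (∫ z : Fin m → X, w (z j) ∂μm) = 1 :=
      fun j => by rw [hμm, pi_marginal lam w m j, hw_one]
    simp [hone]
  have hKlb : c⁻¹ ≤ K := by
    rw [← hint_eval, hK]
    refine harmonic_jensen μm _ hSm_meas (2*L) (2*L + m*L) (by linarith) ?_ ?_
    · intro z; have : 0 ≤ ∑ j : Fin m, w (z j) := Finset.sum_nonneg fun j _ => hw_nonneg _
      linarith
    · intro z
      have : ∑ j : Fin m, w (z j) ≤ ∑ _j : Fin m, L :=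
        Finset.sum_le_sum fun j _ => hw_bdd _
      have h2 : ∑ _j : Fin m, L = m * L := by
        rw [Finset.sum_const, Finset.card_univ, Fintype.card_fin, nsmul_eq_mul]
      linarith [this.trans_eq h2]
  -- π A as an integral
  have hπA : ∫ t, w t * ind t ∂lam = (π A).toReal := by
    have heq : (fun t => w t * ind t) = A.indicator w := by
      funext t; by_cases h : t ∈ A <;> simp [hind, h]
    rw [heq, integral_indicator hA, ← hπ A hA]
  have hπA_nonneg : 0 ≤ (π A).toReal := ENNReal.toReal_nonneg
  -- compute each ∫ G i
  have hGint_eq : ∀ i : Fin (m+1), ∫ y, G i y ∂μM = (π A).toReal * K := by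
    intro i
    have hmp := measurePreserving_piFinSuccAbove (fun _ : Fin (m+1) => lam) i
    have h := hmp.integral_comp
      (MeasurableEquiv.piFinSuccAbove (fun _ : Fin (m+1) => X) i).measurableEmbedding
      (fun p : X × (Fin m → X) => w p.1 * ind p.1 * (2*L + ∑ j, w (p.2 j))⁻¹)
    have hcomp : (fun y : Fin (m+1) → X =>
        (fun p : X × (Fin m → X) => w p.1 * ind p.1 * (2*L + ∑ j, w (p.2 j))⁻¹)
          (MeasurableEquiv.piFinSuccAbove (fun _ : Fin (m+1) => X) i y)) = G i := by
      rw [hG]; rfl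
    rw [hμM, ← hcomp, h,
      integral_prod_mul (f := fun t => w t * ind t)
        (g := fun z : Fin m → X => (2*L + ∑ j, w (z j))⁻¹), hπA]
  -- assemble
  have hsum : ∫ y, (∑ i, G i y) ∂μM = ((m:ℝ)+1) * ((π A).toReal * K) := by
    rw [integral_finset_sum _ fun i _ => hG_int i]
    simp only [hGint_eq, Finset.sum_const, Finset.card_univ, Fintype.card_fin, nsmul_eq_mul]
    push_cast; ring
  have hmain : ((m:ℝ)+1) * ((π A).toReal * K) ≤ ∫ y, F y ∂μM := by
    rw [← hsum]
    exact integral_mono (integrable_finset_sum _ fun i _ => hG_int i) hF_int hpt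
  rw [hisir]
  have hLHS : ((↑(m+2):ℝ) - 1) / (2*L + (↑(m+2):ℝ) - 2) * (π A).toReal
      = ((m:ℝ)+1) * ((π A).toReal * c⁻¹) := by
    rw [hc]; push_cast
    rw [show 2*L + ((m:ℝ)+2) - 2 = 2*L + (m:ℝ) by ring, div_eq_mul_inv]
    ring
  rw [hLHS]
  refine le_trans ?_ hmain
  have : (π A).toReal * c⁻¹ ≤ (π A).toReal * K :=
    mul_le_mul_of_nonneg_left hKlb hπA_nonneg
  nlinarith [this, hm0]
end

section
/- Under the assumptions of the i-SIR minorization bound (bounded weights $w \le L$), the i-SIR kernel $P_N$ is uniformly geometrically ergodic: for every $x \in \mathbb{X}$ and $k \in \mathbb{N}$, $\|P_N^k(x,\cdot) - \pi\|_{TV} \le \kappa_N^k$ where $\kappa_N = 1 - (N-1)/(2L+N-2)$. -/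
open MeasureTheory ProbabilityTheory

/-- Iterates of a Markov kernel. -/
noncomputable def kpow {X : Type*} [MeasurableSpace X] (P : Kernel X X) : ℕ → Kernel X X
  | 0 => Kernel.id
  | n + 1 => P.comp (kpow P n)

section Aux

variable {X : Type*} [MeasurableSpace X]

lemma my_integrable (μ : Measure X) [IsFiniteMeasure μ] {f : X → ℝ} (hf : Measurable f)
    (C : ℝ) (h : ∀ a, |f a| ≤ C) : Integrable f μ :=
  (integrable_const C).mono' hf.aestronglyMeasurable (ae_of_all _ (by simpa using h))

lemma my_pi_prod (lam : Measure X) [IsProbabilityMeasure lam] {n : ℕ} (f : Fin n → X → ℝ) :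
    ∫ y : Fin n → X, ∏ k, f k (y k) ∂(Measure.pi fun _ => lam) = ∏ k, ∫ x, f k x ∂lam := by
  letI : MeasureSpace X := ⟨lam⟩
  haveI : SigmaFinite (volume : Measure X) := inferInstanceAs (SigmaFinite lam)
  exact MeasureTheory.integral_fintype_prod_eq_prod (ι := Fin n) f

lemma my_pi_eval (lam : Measure X) [IsProbabilityMeasure lam] {n : ℕ} (i : Fin n) (g : X → ℝ) :
    ∫ y : Fin n → X, g (y i) ∂(Measure.pi fun _ => lam) = ∫ x, g x ∂lam := by
  classical
  have key := my_pi_prod lam (fun k (t : X) => if k = i then g t else 1)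
  have h1 : ∀ y : Fin n → X, (∏ k, if k = i then g (y k) else 1) = g (y i) := by
    intro y; simp [Finset.prod_ite_eq']
  have h2 : (∏ k : Fin n, ∫ x, (if k = i then g x else 1) ∂lam) = ∫ x, g x ∂lam := by
    have : ∀ k : Fin n, ∫ x, (if k = i then g x else 1 : ℝ) ∂lam
        = if k = i then ∫ x, g x ∂lam else 1 := by
      intro k; split
      · rfl
      · simp
    rw [Finset.prod_congr rfl fun k _ => this k]
    simp [Finset.prod_ite_eq']
  simp only [h1] at key
  rw [key, h2]

lemma my_prod_ite_two {ι M : Type*} [Fintype ι] [DecidableEq ι] [CommMonoid M]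
    {i j : ι} (hij : i ≠ j) (a b : ι → M) :
    (∏ k, (if k = i then a k else if k = j then b k else 1)) = a i * b j := by
  rw [← Finset.mul_prod_erase Finset.univ _ (Finset.mem_univ i)]
  rw [← Finset.mul_prod_erase (Finset.univ.erase i) _
      (Finset.mem_erase.2 ⟨hij.symm, Finset.mem_univ j⟩)]
  rw [Finset.prod_eq_one]
  · simp [hij.symm]
  · intro k hk
    simp only [Finset.mem_erase] at hk
    simp [hk.1, hk.2.1]

lemma my_pi_two (lam : Measure X) [IsProbabilityMeasure lam] {n : ℕ} {i j : Fin n}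
    (hij : i ≠ j) (g h : X → ℝ) :
    ∫ y : Fin n → X, g (y i) * h (y j) ∂(Measure.pi fun _ => lam)
      = (∫ x, g x ∂lam) * ∫ x, h x ∂lam := by
  classical
  have key := my_pi_prod lam (fun k (t : X) => if k = i then g t else if k = j then h t else 1)
  have h1 : ∀ y : Fin n → X,
      (∏ k, if k = i then g (y k) else if k = j then h (y k) else 1) = g (y i) * h (y j) := by
    intro y; exact my_prod_ite_two hij (fun k => g (y k)) (fun k => h (y k))
  have h2 : (∏ k : Fin n, ∫ x, (if k = i then g x else if k = j then h x else 1) ∂lam)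
      = (∫ x, g x ∂lam) * ∫ x, h x ∂lam := by
    have : ∀ k : Fin n, ∫ x, (if k = i then g x else if k = j then h x else 1 : ℝ) ∂lam
        = if k = i then ∫ x, g x ∂lam else if k = j then ∫ x, h x ∂lam else 1 := by
      intro k; split
      · rfl
      · split
        · rfl
        · simp
    rw [Finset.prod_congr rfl fun k _ => this k]
    exact my_prod_ite_two hij _ _
  simp only [h1] at key
  rw [key, h2]

lemma my_tangent {a c D : ℝ} (ha : 0 < a) (hc : 0 ≤ c) (hcD : c ≤ D) :
    2 * c / a - c * D / a ^ 2 ≤ c / D := by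
  rcases eq_or_lt_of_le (hc.trans hcD) with h0 | hD
  · have hc0 : c = 0 := le_antisymm (hcD.trans h0.symm.le) hc
    simp [hc0]
  · rw [div_sub_div _ _ (ne_of_gt ha) (by positivity), div_le_div_iff₀ (by positivity) hD]
    nlinarith [mul_nonneg hc (sq_nonneg (a - D))]

lemma my_div_abs_le_one {u v : ℝ} (hu : 0 ≤ u) (huv : u ≤ v) : |u / v| ≤ 1 := by
  rcases eq_or_lt_of_le (hu.trans huv) with h0 | hv
  · have : u = 0 := le_antisymm (huv.trans h0.symm.le) hu
    simp [this]
  · rw [abs_of_nonneg (div_nonneg hu hv.le)]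
    exact div_le_one_of_le₀ huv hv.le

lemma my_div_mono {u v d : ℝ} (huv : u ≤ v) (hd : 0 ≤ d) : u / d ≤ v / d := by
  rcases eq_or_lt_of_le hd with h0 | h0
  · simp [← h0]
  · exact (div_le_div_iff_of_pos_right h0).2 huv

lemma minor (lam : Measure X) [IsProbabilityMeasure lam]
    (w : X → ℝ) (hw_meas : Measurable w) (hw_nonneg : ∀ x, 0 ≤ w x)
    (L : ℝ) (hL : 1 ≤ L) (hw_bdd : ∀ x, w x ≤ L)
    (hw1 : ∫ a, w a ∂lam = 1) (n : ℕ)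
    (x : X) (A : Set X) (hA : MeasurableSet A) :
    (n : ℝ) / (2 * L + (n : ℝ) - 1) * ∫ a in A, w a ∂lam ≤ isirP lam w (n + 1) x A := by
  classical
  have hL0 : (0:ℝ) < L := by linarith
  have hn0 : (0:ℝ) ≤ (n:ℝ) := Nat.cast_nonneg n
  set μp : Measure (Fin n → X) := Measure.pi fun _ => lam with hμp
  haveI : IsProbabilityMeasure μp := by rw [hμp]; infer_instance
  set ind : X → ℝ := A.indicator fun _ => (1:ℝ) with hind
  have hind_meas : Measurable ind := measurable_const.indicator hA
  have hind0 : ∀ t, 0 ≤ ind t := by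
    intro t; by_cases h : t ∈ A <;> simp [hind, Set.indicator, h]
  have hind1 : ∀ t, ind t ≤ 1 := by
    intro t; by_cases h : t ∈ A <;> simp [hind, Set.indicator, h]
  set p : ℝ := ∫ a in A, w a ∂lam with hp
  have hpeq : ∫ a, w a * ind a ∂lam = p := by
    rw [hp, ← integral_indicator hA]
    congr 1; funext a
    by_cases h : a ∈ A <;> simp [hind, Set.indicator, h]
  have hp0 : 0 ≤ p := setIntegral_nonneg hA fun a _ => hw_nonneg a
  set c : ℝ := 2 * L + (n:ℝ) - 1 with hc
  have hcpos : 0 < c := by rw [hc]; nlinarith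
  -- pointwise facts
  have hwind_nonneg : ∀ t, 0 ≤ w t * ind t := fun t => mul_nonneg (hw_nonneg t) (hind0 t)
  have hwind_le_w : ∀ t, w t * ind t ≤ w t := fun t =>
    mul_le_of_le_one_right (hw_nonneg t) (hind1 t)
  have hwind_le_L : ∀ t, w t * ind t ≤ L := fun t => (hwind_le_w t).trans (hw_bdd t)
  set S : (Fin n → X) → ℝ := fun y => ∑ i, w (y i) with hS
  set SA : (Fin n → X) → ℝ := fun y => ∑ i, w (y i) * ind (y i) with hSA
  have hS_meas : Measurable S :=
    Finset.measurable_sum _ fun i _ => hw_meas.comp (measurable_pi_apply i)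
  have hSA_meas : Measurable SA :=
    Finset.measurable_sum _ fun i _ =>
      (hw_meas.comp (measurable_pi_apply i)).mul (hind_meas.comp (measurable_pi_apply i))
  have hS_nonneg : ∀ y, 0 ≤ S y := fun y =>
    Finset.sum_nonneg fun i _ => hw_nonneg (y i)
  have hS_le : ∀ y, S y ≤ n * L := by
    intro y
    calc S y ≤ ∑ _i : Fin n, L := Finset.sum_le_sum fun i _ => hw_bdd (y i)
      _ = n * L := by simp [Finset.sum_const, nsmul_eq_mul]
  have hSA_nonneg : ∀ y, 0 ≤ SA y := fun y =>
    Finset.sum_nonneg fun i _ => hwind_nonneg (y i)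
  have hSA_le_S : ∀ y, SA y ≤ S y :=
    fun y => Finset.sum_le_sum fun i _ => hwind_le_w (y i)
  have hD_nonneg : ∀ y, 0 ≤ w x + S y := fun y => add_nonneg (hw_nonneg x) (hS_nonneg y)
  have hD_le : ∀ y, w x + S y ≤ L + n * L := fun y => add_le_add (hw_bdd x) (hS_le y)
  have hSA_le_D : ∀ y, SA y ≤ w x + S y := fun y =>
    (hSA_le_S y).trans (le_add_of_nonneg_left (hw_nonneg x))
  -- integrability
  have hiSA : Integrable SA μp := my_integrable μp hSA_meas (n * L)
    (fun y => by rw [abs_of_nonneg (hSA_nonneg y)]; exact (hSA_le_S y).trans (hS_le y))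
  have hD_meas : Measurable fun y => w x + S y := measurable_const.add hS_meas
  have hiSAD : Integrable (fun y => SA y * (w x + S y)) μp :=
    my_integrable μp (hSA_meas.mul hD_meas) ((n * L) * (L + n * L))
      (fun y => by
        rw [abs_of_nonneg (mul_nonneg (hSA_nonneg y) (hD_nonneg y))]
        exact mul_le_mul ((hSA_le_S y).trans (hS_le y)) (hD_le y) (hD_nonneg y)
          (by positivity))
  have hi_ratio1 : Integrable (fun y => SA y / (w x + S y)) μp :=
    my_integrable μp (hSA_meas.div hD_meas) 1
      (fun y => my_div_abs_le_one (hSA_nonneg y) (hSA_le_D y))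
  have hi_ratio2 : Integrable (fun y => (w x * ind x + SA y) / (w x + S y)) μp :=
    my_integrable μp ((measurable_const.add hSA_meas).div hD_meas) 1
      (fun y => my_div_abs_le_one (add_nonneg (hwind_nonneg x) (hSA_nonneg y))
        (add_le_add (hwind_le_w x) (hSA_le_S y)))
  -- single coordinate integrals
  have hsingle : ∀ i : Fin n, ∫ y : Fin n → X, w (y i) * ind (y i) ∂μp = p := by
    intro i
    exact (my_pi_eval lam i (fun t => w t * ind t)).trans hpeq
  have hiSingle : ∀ i : Fin n, Integrable (fun y : Fin n → X => w (y i) * ind (y i)) μp := by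
    intro i
    exact my_integrable μp
      ((hw_meas.comp (measurable_pi_apply i)).mul (hind_meas.comp (measurable_pi_apply i))) L
      (fun y => by rw [abs_of_nonneg (hwind_nonneg (y i))]; exact hwind_le_L (y i))
  have hSAint : ∫ y, SA y ∂μp = n * p := by
    rw [hSA]
    rw [integral_finset_sum _ (fun i _ => hiSingle i)]
    rw [Finset.sum_congr rfl fun i _ => hsingle i]
    simp [Finset.sum_const, nsmul_eq_mul]
  -- the cross terms
  have hcross : ∀ i : Fin n, ∫ y, (w (y i) * ind (y i)) * (w x + S y) ∂μp ≤ c * p := by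
    intro i
    have hexp : (fun y : Fin n → X => (w (y i) * ind (y i)) * (w x + S y))
        = fun y => w x * (w (y i) * ind (y i)) + ∑ j, (w (y i) * ind (y i)) * w (y j) := by
      funext y
      rw [hS, mul_add, mul_comm (w (y i) * ind (y i)) (w x), Finset.mul_sum]
    have hij_int : ∀ j : Fin n,
        Integrable (fun y : Fin n → X => (w (y i) * ind (y i)) * w (y j)) μp := by
      intro j
      exact my_integrable μp
        (((hw_meas.comp (measurable_pi_apply i)).mul
          (hind_meas.comp (measurable_pi_apply i))).mul (hw_meas.comp (measurable_pi_apply j)))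
        (L * L)
        (fun y => by
          rw [abs_of_nonneg (mul_nonneg (hwind_nonneg (y i)) (hw_nonneg (y j)))]
          exact mul_le_mul (hwind_le_L (y i)) (hw_bdd (y j)) (hw_nonneg (y j)) hL0.le)
    rw [hexp, integral_add ((hiSingle i).const_mul (w x))
        (integrable_finset_sum _ (fun j _ => hij_int j)),
      integral_const_mul, hsingle i, integral_finset_sum _ (fun j _ => hij_int j)]
    -- bound the sum over j
    have hjsum : ∑ j, ∫ y, (w (y i) * ind (y i)) * w (y j) ∂μp ≤ ((n:ℝ) - 1) * p + L * p := by
      rw [← Finset.sum_erase_add _ _ (Finset.mem_univ i)]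
      have h1 : ∀ j ∈ Finset.univ.erase i,
          ∫ y, (w (y i) * ind (y i)) * w (y j) ∂μp = p := by
        intro j hj
        have hij : i ≠ j := fun h => (Finset.mem_erase.1 hj).1 h.symm
        exact (my_pi_two lam hij (fun t => w t * ind t) w).trans (by rw [hpeq, hw1, mul_one])
      have h2 : ∫ y, (w (y i) * ind (y i)) * w (y i) ∂μp ≤ L * p := by
        have : ∫ y : Fin n → X, (w (y i) * ind (y i)) * w (y i) ∂μp
            = ∫ t, (w t * ind t) * w t ∂lam :=
          my_pi_eval lam i (fun t => (w t * ind t) * w t)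
        rw [this]
        have hmono : ∫ t, (w t * ind t) * w t ∂lam ≤ ∫ t, L * (w t * ind t) ∂lam := by
          refine integral_mono ?_ ?_ ?_
          · exact my_integrable lam ((hw_meas.mul hind_meas).mul hw_meas) (L * L)
              (fun t => by
                rw [abs_of_nonneg (mul_nonneg (hwind_nonneg t) (hw_nonneg t))]
                exact mul_le_mul (hwind_le_L t) (hw_bdd t) (hw_nonneg t) hL0.le)
          · exact (my_integrable lam (hw_meas.mul hind_meas) L
              (fun t => by rw [Pi.mul_apply, abs_of_nonneg (hwind_nonneg t)]; exact hwind_le_L t)).const_mul L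
          · intro t
            calc (w t * ind t) * w t ≤ (w t * ind t) * L :=
                  mul_le_mul_of_nonneg_left (hw_bdd t) (hwind_nonneg t)
              _ = L * (w t * ind t) := mul_comm _ _
        rw [integral_const_mul, hpeq] at hmono
        exact hmono
      calc (∑ j ∈ Finset.univ.erase i, ∫ y, (w (y i) * ind (y i)) * w (y j) ∂μp)
            + ∫ y, (w (y i) * ind (y i)) * w (y i) ∂μp
          ≤ (∑ _j ∈ Finset.univ.erase i, p) + L * p := by
            refine add_le_add (le_of_eq (Finset.sum_congr rfl h1)) h2
        _ = ((n:ℝ) - 1) * p + L * p := by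
            rw [Finset.sum_const, Finset.card_erase_of_mem (Finset.mem_univ i)]
            rw [Finset.card_univ, Fintype.card_fin, nsmul_eq_mul]
            have hcast : ((n - 1 : ℕ) : ℝ) = (n:ℝ) - 1 := by
              rw [Nat.cast_sub (Fin.pos i), Nat.cast_one]
            rw [hcast]
    have hwxp : w x * p ≤ L * p := mul_le_mul_of_nonneg_right (hw_bdd x) hp0
    calc w x * p + ∑ j, ∫ y, (w (y i) * ind (y i)) * w (y j) ∂μp
        ≤ L * p + (((n:ℝ) - 1) * p + L * p) := add_le_add hwxp hjsum
      _ = c * p := by rw [hc]; ring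
  -- sum over i
  have hSADle : ∫ y, SA y * (w x + S y) ∂μp ≤ (n:ℝ) * (c * p) := by
    have hexp : (fun y => SA y * (w x + S y))
        = fun y => ∑ i, (w (y i) * ind (y i)) * (w x + S y) := by
      funext y; rw [hSA, Finset.sum_mul]
    have hint_i : ∀ i : Fin n,
        Integrable (fun y : Fin n → X => (w (y i) * ind (y i)) * (w x + S y)) μp := by
      intro i
      exact my_integrable μp
        (((hw_meas.comp (measurable_pi_apply i)).mul
          (hind_meas.comp (measurable_pi_apply i))).mul hD_meas) (L * (L + n * L))
        (fun y => by
          rw [abs_of_nonneg (mul_nonneg (hwind_nonneg (y i)) (hD_nonneg y))]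
          exact mul_le_mul (hwind_le_L (y i)) (hD_le y) (hD_nonneg y) hL0.le)
    rw [hexp, integral_finset_sum _ (fun i _ => hint_i i)]
    calc (∑ i, ∫ y, (w (y i) * ind (y i)) * (w x + S y) ∂μp)
        ≤ ∑ _i : Fin n, c * p := Finset.sum_le_sum fun i _ => hcross i
      _ = (n:ℝ) * (c * p) := by simp [Finset.sum_const, nsmul_eq_mul]
  -- the tangent-line lower bound
  have htang : ∫ y, (2 / c * SA y - 1 / c ^ 2 * (SA y * (w x + S y))) ∂μp
      ≤ ∫ y, SA y / (w x + S y) ∂μp := by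
    refine integral_mono ((hiSA.const_mul (2 / c)).sub (hiSAD.const_mul (1 / c ^ 2)))
      hi_ratio1 ?_
    intro y
    show 2 / c * SA y - 1 / c ^ 2 * (SA y * (w x + S y)) ≤ SA y / (w x + S y)
    have heq : 2 / c * SA y - 1 / c ^ 2 * (SA y * (w x + S y))
        = 2 * SA y / c - SA y * (w x + S y) / c ^ 2 := by ring
    rw [heq]
    exact my_tangent hcpos (hSA_nonneg y) (hSA_le_D y)
  have htang2 : ∫ y, (2 / c * SA y - 1 / c ^ 2 * (SA y * (w x + S y))) ∂μp
      = 2 / c * ((n:ℝ) * p) - 1 / c ^ 2 * ∫ y, SA y * (w x + S y) ∂μp := by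
    rw [integral_sub (hiSA.const_mul (2 / c)) (hiSAD.const_mul (1 / c ^ 2)),
      integral_const_mul, integral_const_mul, hSAint]
  -- dropping the extra term in the numerator
  have hdrop : ∫ y, SA y / (w x + S y) ∂μp
      ≤ ∫ y, (w x * ind x + SA y) / (w x + S y) ∂μp := by
    refine integral_mono hi_ratio1 hi_ratio2 ?_
    intro y
    exact my_div_mono (le_add_of_nonneg_left (hwind_nonneg x)) (hD_nonneg y)
  have hfinal : isirP lam w (n + 1) x A = ∫ y, (w x * ind x + SA y) / (w x + S y) ∂μp := rfl
  rw [hfinal]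
  have harith : (n:ℝ) / c * p ≤ 2 / c * ((n:ℝ) * p) - 1 / c ^ 2 * ((n:ℝ) * (c * p)) := by
    have : 2 / c * ((n:ℝ) * p) - 1 / c ^ 2 * ((n:ℝ) * (c * p)) = (n:ℝ) / c * p := by
      field_simp; ring
    rw [this]
  calc (n:ℝ) / c * p
      ≤ 2 / c * ((n:ℝ) * p) - 1 / c ^ 2 * ((n:ℝ) * (c * p)) := harith
    _ ≤ 2 / c * ((n:ℝ) * p) - 1 / c ^ 2 * ∫ y, SA y * (w x + S y) ∂μp := by
        have h2 : (0:ℝ) ≤ 1 / c ^ 2 := by positivity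
        have h3 := mul_le_mul_of_nonneg_left hSADle h2
        linarith
    _ = ∫ y, (2 / c * SA y - 1 / c ^ 2 * (SA y * (w x + S y))) ∂μp := htang2.symm
    _ ≤ ∫ y, SA y / (w x + S y) ∂μp := htang
    _ ≤ ∫ y, (w x * ind x + SA y) / (w x + S y) ∂μp := hdrop

lemma invar (lam : Measure X) [IsProbabilityMeasure lam]
    (w : X → ℝ) (hw_meas : Measurable w) (hw_nonneg : ∀ x, 0 ≤ w x)
    (L : ℝ) (hL : 1 ≤ L) (hw_bdd : ∀ x, w x ≤ L)
    (hw1 : ∫ a, w a ∂lam = 1) (n : ℕ) (A : Set X) (hA : MeasurableSet A) :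
    ∫ y, w y * isirP lam w (n + 1) y A ∂lam = ∫ a in A, w a ∂lam := by
  classical
  have hL0 : (0:ℝ) < L := by linarith
  set μp : Measure (Fin n → X) := Measure.pi fun _ => lam with hμp
  haveI : IsProbabilityMeasure μp := by rw [hμp]; infer_instance
  set ν : Measure (Fin (n + 1) → X) := Measure.pi fun _ => lam with hν
  haveI : IsProbabilityMeasure ν := by rw [hν]; infer_instance
  set ind : X → ℝ := A.indicator fun _ => (1:ℝ) with hind
  have hind_meas : Measurable ind := measurable_const.indicator hA
  have hind0 : ∀ t, 0 ≤ ind t := by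
    intro t; by_cases h : t ∈ A <;> simp [hind, Set.indicator, h]
  have hind1 : ∀ t, ind t ≤ 1 := by
    intro t; by_cases h : t ∈ A <;> simp [hind, Set.indicator, h]
  set p : ℝ := ∫ a in A, w a ∂lam with hp
  have hpeq : ∫ a, w a * ind a ∂lam = p := by
    rw [hp, ← integral_indicator hA]
    congr 1; funext a
    by_cases h : a ∈ A <;> simp [hind, Set.indicator, h]
  have hwind_nonneg : ∀ t, 0 ≤ w t * ind t := fun t => mul_nonneg (hw_nonneg t) (hind0 t)
  have hwind_le_w : ∀ t, w t * ind t ≤ w t := fun t =>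
    mul_le_of_le_one_right (hw_nonneg t) (hind1 t)
  -- the function on the product space
  set G : X × (Fin n → X) → ℝ := fun q =>
    w q.1 * ((w q.1 * ind q.1 + ∑ i, w (q.2 i) * ind (q.2 i)) / (w q.1 + ∑ i, w (q.2 i)))
    with hG
  have hG_meas : Measurable G := by
    refine (hw_meas.comp measurable_fst).mul (Measurable.div ?_ ?_)
    · exact ((hw_meas.comp measurable_fst).mul (hind_meas.comp measurable_fst)).add
        (Finset.measurable_sum _ fun i _ =>
          (hw_meas.comp ((measurable_pi_apply i).comp measurable_snd)).mul
            (hind_meas.comp ((measurable_pi_apply i).comp measurable_snd)))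
    · exact (hw_meas.comp measurable_fst).add
        (Finset.measurable_sum _ fun i _ =>
          hw_meas.comp ((measurable_pi_apply i).comp measurable_snd))
  have hG_bdd : ∀ q, |G q| ≤ L := by
    intro q
    have hnum : 0 ≤ w q.1 * ind q.1 + ∑ i, w (q.2 i) * ind (q.2 i) :=
      add_nonneg (hwind_nonneg q.1) (Finset.sum_nonneg fun i _ => hwind_nonneg (q.2 i))
    have hle : w q.1 * ind q.1 + ∑ i, w (q.2 i) * ind (q.2 i)
        ≤ w q.1 + ∑ i, w (q.2 i) :=
      add_le_add (hwind_le_w q.1) (Finset.sum_le_sum fun i _ => hwind_le_w (q.2 i))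
    rw [hG]
    calc |w q.1 * ((w q.1 * ind q.1 + ∑ i, w (q.2 i) * ind (q.2 i))
            / (w q.1 + ∑ i, w (q.2 i)))|
        = w q.1 * |(w q.1 * ind q.1 + ∑ i, w (q.2 i) * ind (q.2 i))
            / (w q.1 + ∑ i, w (q.2 i))| := by
          rw [abs_mul, abs_of_nonneg (hw_nonneg q.1)]
      _ ≤ L * 1 := mul_le_mul (hw_bdd q.1) (my_div_abs_le_one hnum hle)
            (abs_nonneg _) hL0.le
      _ = L := mul_one L
  have hGint : Integrable G (lam.prod μp) := my_integrable _ hG_meas L hG_bdd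
  -- move to the product space
  have step1 : ∫ y, w y * isirP lam w (n + 1) y A ∂lam = ∫ q, G q ∂(lam.prod μp) := by
    rw [integral_prod G hGint]
    congr 1; funext y
    have h1 : isirP lam w (n + 1) y A
        = ∫ z, (w y * ind y + ∑ i, w (z i) * ind (z i)) / (w y + ∑ i, w (z i)) ∂μp := rfl
    rw [h1, ← integral_const_mul]
  -- move to the full pi space
  set e : ((j : Fin (n + 1)) → X) ≃ᵐ X × ((j : Fin n) → X) :=
    MeasurableEquiv.piFinSuccAbove (fun _ : Fin (n + 1) => X) 0 with he
  have hmp : MeasurePreserving e ν (lam.prod μp) :=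
    measurePreserving_piFinSuccAbove (fun _ : Fin (n + 1) => lam) 0
  have step2 : ∫ q, G q ∂(lam.prod μp) = ∫ u, G (e u) ∂ν := (hmp.integral_comp' G).symm
  -- identify the integrand on the pi space
  have hGe : ∀ u : Fin (n + 1) → X, G (e u)
      = w (u 0) * ((∑ j, w (u j) * ind (u j)) / ∑ j, w (u j)) := by
    intro u
    have h1 : e u = (u 0, fun j => u j.succ) := by
      simp [he, MeasurableEquiv.piFinSuccAbove, Fin.removeNth]
      rfl
    rw [h1, hG]
    simp only
    rw [Fin.sum_univ_succ (f := fun j => w (u j) * ind (u j)),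
      Fin.sum_univ_succ (f := fun j => w (u j))]
  have step3 : ∫ u, G (e u) ∂ν
      = ∫ u, w (u 0) * ((∑ j, w (u j) * ind (u j)) / ∑ j, w (u j)) ∂ν := by
    congr 1; funext u; exact hGe u
  -- expand into a sum of terms
  have hterm_int : ∀ j : Fin (n + 1),
      Integrable (fun u : Fin (n + 1) → X => w (u 0) * (w (u j) * ind (u j)) / ∑ i, w (u i)) ν := by
    intro j
    refine my_integrable _ ?_ L ?_
    · exact (((hw_meas.comp (measurable_pi_apply 0)).mul
        ((hw_meas.comp (measurable_pi_apply j)).mul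
          (hind_meas.comp (measurable_pi_apply j)))).div
        (Finset.measurable_sum _ fun i _ => hw_meas.comp (measurable_pi_apply i)))
    · intro u
      have hSle : w (u j) * ind (u j) ≤ ∑ i, w (u i) :=
        (hwind_le_w (u j)).trans
          (Finset.single_le_sum (fun i _ => hw_nonneg (u i)) (Finset.mem_univ j))
      rw [mul_div_assoc, abs_mul, abs_of_nonneg (hw_nonneg (u 0))]
      calc w (u 0) * |(w (u j) * ind (u j)) / ∑ i, w (u i)|
          ≤ L * 1 := mul_le_mul (hw_bdd (u 0))
            (my_div_abs_le_one (hwind_nonneg (u j)) hSle) (abs_nonneg _) hL0.le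
        _ = L := mul_one L
  have hterm'_int : ∀ j : Fin (n + 1),
      Integrable (fun u : Fin (n + 1) → X => w (u j) * (w (u 0) * ind (u 0)) / ∑ i, w (u i)) ν := by
    intro j
    refine my_integrable _ ?_ L ?_
    · exact (((hw_meas.comp (measurable_pi_apply j)).mul
        ((hw_meas.comp (measurable_pi_apply 0)).mul
          (hind_meas.comp (measurable_pi_apply 0)))).div
        (Finset.measurable_sum _ fun i _ => hw_meas.comp (measurable_pi_apply i)))
    · intro u
      have hSle : w (u j) ≤ ∑ i, w (u i) :=
        Finset.single_le_sum (fun i _ => hw_nonneg (u i)) (Finset.mem_univ j)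
      have h1 : w (u j) * (w (u 0) * ind (u 0)) / (∑ i, w (u i))
          = (w (u 0) * ind (u 0)) * (w (u j) / ∑ i, w (u i)) := by ring
      rw [h1, abs_mul, abs_of_nonneg (hwind_nonneg (u 0))]
      calc (w (u 0) * ind (u 0)) * |w (u j) / ∑ i, w (u i)|
          ≤ L * 1 := mul_le_mul ((hwind_le_w (u 0)).trans (hw_bdd (u 0)))
            (my_div_abs_le_one (hw_nonneg (u j)) hSle) (abs_nonneg _) hL0.le
        _ = L := mul_one L
  have step4 : ∫ u, w (u 0) * ((∑ j, w (u j) * ind (u j)) / ∑ j, w (u j)) ∂ν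
      = ∑ j : Fin (n + 1),
          ∫ u, w (u 0) * (w (u j) * ind (u j)) / ∑ i, w (u i) ∂ν := by
    rw [← integral_finset_sum _ fun j _ => hterm_int j]
    congr 1; funext u
    rw [mul_div_assoc']
    rw [← Finset.sum_div, ← Finset.mul_sum]
  -- the swap argument
  have hswap : ∀ j : Fin (n + 1),
      ∫ u, w (u 0) * (w (u j) * ind (u j)) / ∑ i, w (u i) ∂ν
        = ∫ u, w (u j) * (w (u 0) * ind (u 0)) / ∑ i, w (u i) ∂ν := by
    intro j
    set σ : Equiv.Perm (Fin (n + 1)) := Equiv.swap 0 j with hσ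
    set T : ((i : Fin (n + 1)) → X) ≃ᵐ ((i : Fin (n + 1)) → X) :=
      MeasurableEquiv.piCongrLeft (fun _ => X) σ with hT
    have hmpT : MeasurePreserving T ν ν :=
      measurePreserving_piCongrLeft (fun _ : Fin (n + 1) => lam) σ
    have hTapp : ∀ (u : Fin (n + 1) → X) (i : Fin (n + 1)), T u i = u (σ.symm i) := by
      intro u i
      have h0 : i = σ (σ.symm i) := (Equiv.apply_symm_apply σ i).symm
      rw [h0, hT]
      simp only [MeasurableEquiv.coe_piCongrLeft, Equiv.piCongrLeft_apply_apply,
        Equiv.symm_apply_apply]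
    have hcomp : ∀ u : Fin (n + 1) → X,
        w (T u 0) * (w (T u j) * ind (T u j)) / ∑ i, w (T u i)
          = w (u j) * (w (u 0) * ind (u 0)) / ∑ i, w (u i) := by
      intro u
      have h0 : T u 0 = u j := by
        rw [hTapp u 0, hσ, Equiv.symm_swap, Equiv.swap_apply_left]
      have hj : T u j = u 0 := by
        rw [hTapp u j, hσ, Equiv.symm_swap, Equiv.swap_apply_right]
      have hsum : ∑ i, w (T u i) = ∑ i, w (u i) := by
        rw [Finset.sum_congr rfl fun i _ => by rw [hTapp u i]]
        exact Equiv.sum_comp σ.symm fun i => w (u i)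
      rw [h0, hj, hsum]
    calc ∫ u, w (u 0) * (w (u j) * ind (u j)) / ∑ i, w (u i) ∂ν
        = ∫ u, w (T u 0) * (w (T u j) * ind (T u j)) / ∑ i, w (T u i) ∂ν :=
          (hmpT.integral_comp'
            (fun u => w (u 0) * (w (u j) * ind (u j)) / ∑ i, w (u i))).symm
      _ = ∫ u, w (u j) * (w (u 0) * ind (u 0)) / ∑ i, w (u i) ∂ν := by
          congr 1; funext u; exact hcomp u
  -- recombine
  have step5 : ∑ j : Fin (n + 1),
      ∫ u, w (u j) * (w (u 0) * ind (u 0)) / ∑ i, w (u i) ∂ν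
        = ∫ u, w (u 0) * ind (u 0) ∂ν := by
    rw [← integral_finset_sum _ fun j _ => hterm'_int j]
    congr 1; funext u
    have hS0 : (0:ℝ) ≤ ∑ i, w (u i) := Finset.sum_nonneg fun i _ => hw_nonneg (u i)
    have hsum : (∑ j : Fin (n + 1), w (u j) * (w (u 0) * ind (u 0)) / ∑ i, w (u i))
        = (∑ j, w (u j)) * (w (u 0) * ind (u 0)) / ∑ i, w (u i) := by
      rw [← Finset.sum_div, ← Finset.sum_mul]
    rw [hsum]
    rcases eq_or_lt_of_le hS0 with h0 | h0
    · have hw0 : w (u 0) = 0 := by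
        have h1 : w (u 0) ≤ ∑ i, w (u i) :=
          Finset.single_le_sum (fun i _ => hw_nonneg (u i)) (Finset.mem_univ 0)
        exact le_antisymm (h1.trans h0.symm.le) (hw_nonneg (u 0))
      rw [← h0, hw0]
      simp
    · rw [mul_comm (∑ j, w (u j)) (w (u 0) * ind (u 0)), mul_div_assoc,
        div_self (ne_of_gt h0), mul_one]
  have step6 : ∫ u : Fin (n + 1) → X, w (u 0) * ind (u 0) ∂ν = p :=
    (my_pi_eval lam (0 : Fin (n + 1)) (fun t => w t * ind t)).trans hpeq
  rw [step1, step2, step3, step4, Finset.sum_congr rfl fun j _ => hswap j, step5, step6, hp]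

end Aux

/-- Uniform geometric ergodicity of the i-SIR kernel under bounded weights. -/
theorem stmt_4 {X : Type*} [MeasurableSpace X] (lam π : Measure X)
    [IsProbabilityMeasure lam] [IsProbabilityMeasure π]
    (w : X → ℝ) (hw_meas : Measurable w) (hw_nonneg : ∀ x, 0 ≤ w x)
    (L : ℝ) (hL : 1 ≤ L) (hw_bdd : ∀ x, w x ≤ L)
    (hπ : ∀ s : Set X, MeasurableSet s → (π s).toReal = ∫ x in s, w x ∂lam)
    (N : ℕ) (hN : 2 ≤ N)
    (P : Kernel X X) [IsMarkovKernel P]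
    (hP : ∀ x, ∀ A : Set X, MeasurableSet A → (P x A).toReal = isirP lam w N x A) :
    ∀ k : ℕ, ∀ x : X, ∀ A : Set X, MeasurableSet A →
      |(kpow P k x A).toReal - (π A).toReal| ≤
        (1 - ((N : ℝ) - 1) / (2 * L + (N : ℝ) - 2)) ^ k := by
  obtain ⟨n, rfl⟩ : ∃ n, N = n + 1 := ⟨N - 1, by omega⟩
  have hn1 : 1 ≤ n := by omega
  have hn0 : (1 : ℝ) ≤ (n : ℝ) := by exact_mod_cast hn1
  set ε : ℝ := (n : ℝ) / (2 * L + (n : ℝ) - 1) with hεdef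
  have hapos : (0 : ℝ) < 2 * L + (n : ℝ) - 1 := by nlinarith
  have hε0 : 0 < ε := div_pos (by linarith) hapos
  have hε1 : ε < 1 := by rw [hεdef, div_lt_one hapos]; nlinarith
  have hκ : (1 - ((↑(n + 1) : ℝ) - 1) / (2 * L + (↑(n + 1) : ℝ) - 2)) = 1 - ε := by
    rw [hεdef]; push_cast; ring_nf
  simp only [hκ]
  -- basic facts about w and π
  have hw1 : ∫ a, w a ∂lam = 1 := by
    have h := hπ Set.univ MeasurableSet.univ
    rw [Measure.restrict_univ] at h
    simpa [measure_univ] using h.symm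
  -- real minorization
  have hminor : ∀ x (A : Set X), MeasurableSet A → ε * (π A).toReal ≤ (P x A).toReal := by
    intro x A hA
    rw [hP x A hA, hπ A hA]
    exact minor lam w hw_meas hw_nonneg L hL hw_bdd hw1 n x A hA
  -- measure-level minorization
  have hle : ∀ x, (ENNReal.ofReal ε) • π ≤ P x := by
    intro x
    refine Measure.le_iff.2 fun s hs => ?_
    rw [Measure.smul_apply, smul_eq_mul]
    have h1 : ENNReal.ofReal ε * π s = ENNReal.ofReal (ε * (π s).toReal) := by
      rw [ENNReal.ofReal_mul hε0.le, ENNReal.ofReal_toReal (measure_ne_top π s)]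
    rw [h1, ← ENNReal.ofReal_toReal (measure_ne_top (P x) s)]
    exact ENNReal.ofReal_le_ofReal (hminor x s hs)
  -- invariance: real level
  have hwd : π = lam.withDensity (fun a => (Real.toNNReal (w a) : ENNReal)) := by
    ext s hs
    rw [withDensity_apply _ hs, ← ENNReal.ofReal_toReal (measure_ne_top π s), hπ s hs]
    have hint : Integrable w (lam.restrict s) :=
      (my_integrable lam hw_meas L
        (fun a => abs_le.2 ⟨by linarith [hw_nonneg a], hw_bdd a⟩)).restrict
    rw [ofReal_integral_eq_lintegral_ofReal hint (ae_of_all _ hw_nonneg)]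
    rfl
  have hinv1 : ∀ (A : Set X), MeasurableSet A → ∫ y, (P y A).toReal ∂π = (π A).toReal := by
    intro A hA
    calc ∫ y, (P y A).toReal ∂π = ∫ y, w y * isirP lam w (n + 1) y A ∂lam := by
          rw [hwd, integral_withDensity_eq_integral_smul hw_meas.real_toNNReal]
          congr 1
          funext y
          rw [hP y A hA, NNReal.smul_def, Real.coe_toNNReal _ (hw_nonneg y), smul_eq_mul]
      _ = ∫ a in A, w a ∂lam := invar lam w hw_meas hw_nonneg L hL hw_bdd hw1 n A hA
      _ = (π A).toReal := (hπ A hA).symm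
  -- invariance: measure level
  have hbind : π.bind P = π := by
    ext s hs
    rw [Measure.bind_apply hs (Kernel.measurable P).aemeasurable]
    have hfin : ∫⁻ y, P y s ∂π ≠ ⊤ := by
      refine ne_of_lt (lt_of_le_of_lt (lintegral_mono fun y => prob_le_one) ?_)
      simp
    rw [← ENNReal.ofReal_toReal hfin, ← ENNReal.ofReal_toReal (measure_ne_top π s)]
    congr 1
    rw [← hinv1 s hs,
      integral_toReal (Kernel.measurable_coe P hs).aemeasurable
        (ae_of_all _ fun y => measure_lt_top _ _)]
  -- Markov instances for iterates
  have hmk : ∀ k, IsMarkovKernel (kpow P k) := by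
    intro k; induction k with
    | zero => rw [kpow]; infer_instance
    | succ k ih => rw [kpow]; haveI := ih; infer_instance
  -- commuted form of the iterate
  have hcomm : ∀ k, kpow P (k + 1) = (kpow P k).comp P := by
    intro k; induction k with
    | zero =>
      show P.comp (kpow P 0) = (kpow P 0).comp P
      rw [show kpow P 0 = Kernel.id from rfl, Kernel.comp_id, Kernel.id_comp]
    | succ k ih =>
      haveI := hmk k
      calc P.comp (kpow P (k + 1)) = P ∘ₖ (kpow P k ∘ₖ P) := by rw [ih]
        _ = (P ∘ₖ kpow P k) ∘ₖ P := (Kernel.comp_assoc P (kpow P k) P).symm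
        _ = (kpow P (k + 1)).comp P := rfl
  -- invariance for iterates
  have hbindk : ∀ k, π.bind (kpow P k) = π := by
    intro k; induction k with
    | zero =>
      have : ⇑(kpow P 0) = fun x : X => Measure.dirac x := by
        funext x; exact Kernel.id_apply x
      rw [show kpow P 0 = Kernel.id from rfl]
      rw [show ⇑(Kernel.id : Kernel X X) = fun x : X => Measure.dirac x from this]
      exact Measure.bind_dirac
    | succ k ih =>
      haveI := hmk k
      ext s hs
      rw [Measure.bind_apply hs (Kernel.measurable _).aemeasurable, hcomm k]
      simp only [Kernel.comp_apply' _ _ _ hs]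
      rw [← Measure.lintegral_bind (Kernel.measurable P).aemeasurable (Kernel.measurable_coe _ hs).aemeasurable, hbind,
        ← Measure.bind_apply hs (Kernel.measurable _).aemeasurable, ih]
  -- main induction
  intro k
  induction k with
  | zero =>
    intro x A hA
    have hπA0 : 0 ≤ (π A).toReal := ENNReal.toReal_nonneg
    have hπA1 : (π A).toReal ≤ 1 := by
      have h1 : π A ≤ 1 := prob_le_one
      have := ENNReal.toReal_mono ENNReal.one_ne_top h1
      simpa using this
    have hid : kpow P 0 x A = Measure.dirac x A := by rw [show kpow P 0 = Kernel.id from rfl, Kernel.id_apply]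
    rw [pow_zero, hid, Measure.dirac_apply' _ hA]
    by_cases hx : x ∈ A
    · simp only [Set.indicator_of_mem hx, Pi.one_apply, ENNReal.toReal_one]
      rw [abs_le]; constructor <;> linarith
    · simp only [Set.indicator_of_notMem hx, ENNReal.toReal_zero]
      rw [abs_le]; constructor <;> linarith
  | succ k ih =>
    intro x A hA
    haveI := hmk k
    haveI := hmk (k + 1)
    haveI : IsFiniteMeasure ((ENNReal.ofReal ε) • π) := by
      refine ⟨?_⟩
      rw [Measure.smul_apply, smul_eq_mul, measure_univ, mul_one]
      exact ENNReal.ofReal_lt_top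
    set ρ : Measure X := P x - (ENNReal.ofReal ε) • π with hρdef
    have hρadd : ρ + (ENNReal.ofReal ε) • π = P x := Measure.sub_add_cancel_of_le (hle x)
    have hρle : ρ ≤ P x := Measure.sub_le
    haveI : IsFiniteMeasure ρ :=
      ⟨lt_of_le_of_lt (hρle Set.univ) (measure_lt_top (P x) Set.univ)⟩
    have hmass : ε + (ρ Set.univ).toReal = 1 := by
      have h0 : ρ Set.univ + ENNReal.ofReal ε = 1 := by
        have h := congrArg (fun μ : Measure X => μ Set.univ) hρadd
        simpa [Measure.smul_apply, measure_univ] using h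
      have h1 := congrArg ENNReal.toReal h0
      rw [ENNReal.toReal_add (measure_ne_top _ _) ENNReal.ofReal_ne_top] at h1
      simp only [ENNReal.toReal_ofReal hε0.le, ENNReal.toReal_one] at h1
      linarith
    have hπk : ∫⁻ y, kpow P k y A ∂π = π A := by
      rw [← Measure.bind_apply hA (Kernel.measurable _).aemeasurable, hbindk k]
    have h1 : kpow P (k + 1) x A = ∫⁻ y, kpow P k y A ∂ρ + ENNReal.ofReal ε * π A := by
      rw [hcomm k, Kernel.comp_apply' _ _ _ hA, ← hρadd, lintegral_add_measure,
        lintegral_smul_measure, hπk, smul_eq_mul]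
    have hfinρ : ∫⁻ y, kpow P k y A ∂ρ ≠ ⊤ := by
      refine ne_of_lt (lt_of_le_of_lt (lintegral_mono fun y => prob_le_one) ?_)
      rw [lintegral_one]
      exact measure_lt_top ρ _
    have hJ : (∫⁻ y, kpow P k y A ∂ρ).toReal = ∫ y, (kpow P k y A).toReal ∂ρ :=
      (integral_toReal (Kernel.measurable_coe _ hA).aemeasurable
        (ae_of_all _ fun y => measure_lt_top _ _)).symm
    have h2 : (kpow P (k + 1) x A).toReal
        = (∫ y, (kpow P k y A).toReal ∂ρ) + ε * (π A).toReal := by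
      rw [h1, ENNReal.toReal_add hfinρ
        (ENNReal.mul_ne_top ENNReal.ofReal_ne_top (measure_ne_top π A)), hJ,
        ENNReal.toReal_mul, ENNReal.toReal_ofReal hε0.le]
    have hg_meas : Measurable fun y => (kpow P k y A).toReal :=
      (Kernel.measurable_coe _ hA).ennreal_toReal
    have hgbdd : ∀ y : X, |(kpow P k y A).toReal| ≤ 1 := by
      intro y
      rw [abs_of_nonneg ENNReal.toReal_nonneg]
      have := ENNReal.toReal_mono ENNReal.one_ne_top (prob_le_one (μ := kpow P k y) (s := A))
      simpa using this
    have hgint : Integrable (fun y => (kpow P k y A).toReal) ρ :=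
      my_integrable ρ hg_meas 1 hgbdd
    have key : (kpow P (k + 1) x A).toReal - (π A).toReal
        = ∫ y, ((kpow P k y A).toReal - (π A).toReal) ∂ρ := by
      rw [h2, integral_sub hgint (integrable_const _), integral_const, smul_eq_mul]
      have hρu : ρ.real Set.univ = 1 - ε := by rw [measureReal_def]; linarith
      rw [hρu]; ring
    rw [key]
    have habs : |∫ y, ((kpow P k y A).toReal - (π A).toReal) ∂ρ|
        ≤ ∫ y, |(kpow P k y A).toReal - (π A).toReal| ∂ρ := by
      simpa using
        norm_integral_le_integral_norm (fun y => (kpow P k y A).toReal - (π A).toReal) (μ := ρ)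
    refine habs.trans ?_
    have hmono : ∫ y, |(kpow P k y A).toReal - (π A).toReal| ∂ρ
        ≤ ∫ _y, (1 - ε) ^ k ∂ρ := by
      refine integral_mono (hgint.sub (integrable_const _)).abs (integrable_const _) ?_
      intro y
      exact ih y A hA
    refine hmono.trans ?_
    rw [integral_const, smul_eq_mul]
    have hρu : ρ.real Set.univ = 1 - ε := by rw [measureReal_def]; linarith
    rw [hρu, pow_succ]
    nlinarith [pow_nonneg (by linarith : (0:ℝ) ≤ 1 - ε) k]
end

section
/- Let $K \subset \mathbb{X}$ with $w_{\infty,K} := \sup_{x \in K} w(x)/\lambda(w) < \infty$ and $\pi(K) > 0$. Then for every $x \in K$ and measurable $A$, the i-SIR kernel satisfies $P_N(x,A) \ge \epsilon_{N,K}\,\pi_K(A)$, where $\epsilon_{N,K} = (N-1)\pi(K)/(2 w_{\infty,K} + N - 2)$ and $\pi_K(A) = \pi(A \cap K)/\pi(K)$. -/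
open MeasureTheory

section Helpers
variable {X : Type*} [MeasurableSpace X] {ι : Type*} [Fintype ι] [DecidableEq ι]
  (lam : Measure X) [IsProbabilityMeasure lam]

lemma isir_prod_integrable (F : ι → X → ℝ) (hF : ∀ k, Integrable (F k) lam) :
    Integrable (fun y : ι → X => ∏ k, F k (y k)) (Measure.pi fun _ => lam) := by
  letI : MeasureSpace X := ⟨lam⟩
  exact Integrable.fintype_prod (𝕜 := ℝ) hF

lemma isir_prod_integral (F : ι → X → ℝ) :
    ∫ y : ι → X, ∏ k, F k (y k) ∂(Measure.pi fun _ => lam) = ∏ k, ∫ z, F k z ∂lam := by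
  letI : MeasureSpace X := ⟨lam⟩
  exact integral_fintype_prod_eq_prod (𝕜 := ℝ) F

end Helpers

section Helpers2
variable {X : Type*} [MeasurableSpace X] {ι : Type*} [Fintype ι] [DecidableEq ι]
  (lam : Measure X) [IsProbabilityMeasure lam]

lemma isir_pair_prod (F : ι → ℝ) {i j : ι} (hij : i ≠ j)
    (hF : ∀ k, k ≠ i → k ≠ j → F k = 1) : ∏ k, F k = F i * F j := by
  rw [← Finset.mul_prod_erase Finset.univ F (Finset.mem_univ i),
    ← Finset.mul_prod_erase _ F (Finset.mem_erase.mpr ⟨Ne.symm hij, Finset.mem_univ j⟩),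
    Finset.prod_eq_one, mul_one]
  intro k hk
  simp only [Finset.mem_erase] at hk
  exact hF k hk.2.1 hk.1

lemma isir_single_eq (f : X → ℝ) (i : ι) (y : ι → X) :
    ∏ k, (if k = i then f else fun _ => (1:ℝ)) (y k) = f (y i) := by
  simp [ite_apply, Finset.prod_ite_eq']

lemma isir_single_integrable (f : X → ℝ) (hf : Integrable f lam) (i : ι) :
    Integrable (fun y : ι → X => f (y i)) (Measure.pi fun _ => lam) := by
  have := isir_prod_integrable lam (fun k => if k = i then f else fun _ => (1:ℝ))
    (fun k => by by_cases h : k = i <;> simp [h, hf])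
  simpa [isir_single_eq] using this

lemma isir_single_integral (f : X → ℝ) (i : ι) :
    ∫ y : ι → X, f (y i) ∂(Measure.pi fun _ => lam) = ∫ z, f z ∂lam := by
  have := isir_prod_integral lam (fun k => if k = i then f else fun _ => (1:ℝ))
  simp only [isir_single_eq] at this
  rw [this]
  simp [apply_ite (fun g : X → ℝ => ∫ z, g z ∂lam)]

lemma isir_pair_eq (f g : X → ℝ) {i j : ι} (hij : i ≠ j) (y : ι → X) :
    ∏ k, (if k = i then f else if k = j then g else fun _ => (1:ℝ)) (y k)
      = f (y i) * g (y j) := by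
  rw [isir_pair_prod _ hij]
  · simp [hij, Ne.symm hij]
  · intro k h1 h2; simp [h1, h2]

lemma isir_pair_integrable (f g : X → ℝ) (hf : Integrable f lam) (hg : Integrable g lam)
    {i j : ι} (hij : i ≠ j) :
    Integrable (fun y : ι → X => f (y i) * g (y j)) (Measure.pi fun _ => lam) := by
  have := isir_prod_integrable lam (fun k => if k = i then f else if k = j then g else fun _ => (1:ℝ))
    (fun k => by by_cases h : k = i
                 · simp [h, hf]
                 · by_cases h2 : k = j <;> simp [h, h2, hg, Ne.symm hij])
  have heq : (fun y : ι → X => ∏ k, (if k = i then f else if k = j then g else fun _ => (1:ℝ)) (y k))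
      = fun y => f (y i) * g (y j) := funext (isir_pair_eq f g hij)
  rwa [heq] at this

lemma isir_pair_integral (f g : X → ℝ) {i j : ι} (hij : i ≠ j) :
    ∫ y : ι → X, f (y i) * g (y j) ∂(Measure.pi fun _ => lam)
      = (∫ z, f z ∂lam) * ∫ z, g z ∂lam := by
  have := isir_prod_integral lam (fun k => if k = i then f else if k = j then g else fun _ => (1:ℝ))
  have heq : (fun y : ι → X => ∏ k, (if k = i then f else if k = j then g else fun _ => (1:ℝ)) (y k))
      = fun y => f (y i) * g (y j) := funext (isir_pair_eq f g hij)
  rw [heq] at this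
  rw [this, isir_pair_prod _ hij]
  · simp [hij, Ne.symm hij]
  · intro k h1 h2; simp [h1, h2]

end Helpers2

/-- Local minorization of the i-SIR kernel on a set `K` where the normalized weight is
bounded by `wK` and which has positive target mass. -/
theorem stmt_6 {X : Type*} [MeasurableSpace X] (lam π : Measure X)
    [IsProbabilityMeasure lam] [IsProbabilityMeasure π]
    (w : X → ℝ) (hw_meas : Measurable w) (hw_nonneg : ∀ x, 0 ≤ w x)
    (hw_int : Integrable w lam) (hw_pos : 0 < ∫ z, w z ∂lam)
    (hπ : ∀ s : Set X, MeasurableSet s →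
      (π s).toReal = (∫ x in s, w x ∂lam) / ∫ z, w z ∂lam)
    (K : Set X) (hK : MeasurableSet K)
    (wK : ℝ) (hwK : ∀ x ∈ K, w x / ∫ z, w z ∂lam ≤ wK)
    (hπK : 0 < (π K).toReal)
    (N : ℕ) (hN : 2 ≤ N) (x : X) (hx : x ∈ K) (A : Set X) (hA : MeasurableSet A) :
    ((N : ℝ) - 1) * (π K).toReal / (2 * wK + (N : ℝ) - 2) *
        ((π (A ∩ K)).toReal / (π K).toReal) ≤ isirP lam w N x A := by
  classical
  set c : ℝ := ∫ z, w z ∂lam with hc_def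
  have hc : 0 < c := hw_pos
  -- positivity of wK
  have hwK_pos : 0 < wK := by
    by_contra h
    push_neg at h
    have hw0 : ∀ z ∈ K, w z = 0 := fun z hz =>
      le_antisymm (by
        have := hwK z hz
        nlinarith [(div_le_iff₀ hc).mp this]) (hw_nonneg z)
    have hint0 : ∫ z in K, w z ∂lam = 0 := by
      rw [setIntegral_congr_fun hK (g := fun _ => (0:ℝ)) (fun z hz => hw0 z hz)]
      simp
    have := hπ K hK
    rw [hint0] at this
    simp [this] at hπK
  set W : ℝ := wK * c with hW_def
  have hW_pos : 0 < W := mul_pos hwK_pos hc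
  have hW : ∀ z ∈ K, w z ≤ W := fun z hz => (div_le_iff₀ hc).mp (hwK z hz)
  have hN1 : (1:ℝ) ≤ (N:ℝ) := by exact_mod_cast Nat.one_le_of_lt hN
  have hN2 : (2:ℝ) ≤ (N:ℝ) := by exact_mod_cast hN
  set m : ℝ := (2 * wK + (N:ℝ) - 2) * c with hm_def
  have hq : 0 < 2 * wK + (N:ℝ) - 2 := by nlinarith
  have hm : 0 < m := mul_pos hq hc
  set φ : X → ℝ := (A ∩ K).indicator w with hφ_def
  have hφ_int : Integrable φ lam := hw_int.indicator (hA.inter hK)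
  have hφ_nonneg : ∀ z, 0 ≤ φ z := fun z => Set.indicator_nonneg (fun t _ => hw_nonneg t) z
  set I : ℝ := ∫ z, φ z ∂lam with hI_def
  have hI_nonneg : 0 ≤ I := integral_nonneg hφ_nonneg
  have hπAK : (π (A ∩ K)).toReal = I / c := by
    rw [hπ (A ∩ K) (hA.inter hK), hI_def, hφ_def, integral_indicator (hA.inter hK)]
  set a : ℝ := 2 / m - 2 * W / m ^ 2 with ha_def
  set b : ℝ := 1 / m ^ 2 with hb_def
  set μ : Measure (Fin (N-1) → X) := Measure.pi fun _ => lam with hμ_def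
  set g : (Fin (N-1) → X) → ℝ := fun y =>
    ∑ i, (a * φ (y i) - b * ∑ j ∈ Finset.univ.erase i, φ (y i) * w (y j)) with hg_def
  -- integrability of the summands
  have hgi : ∀ i : Fin (N-1), Integrable
      (fun y : Fin (N-1) → X => a * φ (y i) - b * ∑ j ∈ Finset.univ.erase i, φ (y i) * w (y j)) μ := by
    intro i
    refine ((isir_single_integrable lam φ hφ_int i).const_mul a).sub ?_
    refine Integrable.const_mul ?_ b
    exact integrable_finset_sum _ (fun j hj =>
      isir_pair_integrable lam φ w hφ_int hw_int (Finset.ne_of_mem_erase hj).symm)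
  have hg_int : Integrable g μ := integrable_finset_sum _ (fun i _ => hgi i)
  -- value of the integral of g
  have hcard : ∀ i : Fin (N-1), (Finset.univ.erase i).card = N - 2 := by
    intro i
    rw [Finset.card_erase_of_mem (Finset.mem_univ i), Finset.card_univ, Fintype.card_fin]
    omega
  have hgval : ∫ y, g y ∂μ = ((N:ℝ) - 1) * (a * I - b * (((N:ℝ) - 2) * (I * c))) := by
    rw [hg_def, integral_finset_sum _ (fun i _ => hgi i)]
    have : ∀ i : Fin (N-1),
        (∫ y, (a * φ (y i) - b * ∑ j ∈ Finset.univ.erase i, φ (y i) * w (y j)) ∂μ)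
          = a * I - b * (((N:ℝ) - 2) * (I * c)) := by
      intro i
      rw [integral_sub ((isir_single_integrable lam φ hφ_int i).const_mul a)
        (Integrable.const_mul (integrable_finset_sum _ (fun j hj =>
          isir_pair_integrable lam φ w hφ_int hw_int (Finset.ne_of_mem_erase hj).symm)) b),
        integral_const_mul, integral_const_mul, isir_single_integral,
        integral_finset_sum _ (fun j hj =>
          isir_pair_integrable lam φ w hφ_int hw_int (Finset.ne_of_mem_erase hj).symm)]
      have : ∀ j ∈ Finset.univ.erase i,
          (∫ y, φ (y i) * w (y j) ∂μ) = I * c :=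
        fun j hj => isir_pair_integral lam φ w (Finset.ne_of_mem_erase hj).symm
      rw [Finset.sum_congr rfl this, Finset.sum_const, hcard i, nsmul_eq_mul]
      congr 2
      push_cast [Nat.cast_sub hN]
      ring
    rw [Finset.sum_congr rfl (fun i _ => this i), Finset.sum_const, Finset.card_univ,
      Fintype.card_fin, nsmul_eq_mul]
    congr 1
    push_cast [Nat.cast_sub (Nat.one_le_of_lt hN)]
    ring
  -- pointwise bound
  have hpt : ∀ y : Fin (N-1) → X, g y ≤
      (w x * A.indicator (fun _ => (1 : ℝ)) x + ∑ i, w (y i) * A.indicator (fun _ => (1 : ℝ)) (y i)) /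
        (w x + ∑ i, w (y i)) := by
    intro y
    have hS_nonneg : (0:ℝ) ≤ ∑ i, w (y i) := Finset.sum_nonneg fun i _ => hw_nonneg _
    have hD_nonneg : 0 ≤ w x + ∑ i, w (y i) := add_nonneg (hw_nonneg x) hS_nonneg
    have hterm : ∀ i : Fin (N-1), a * φ (y i) - b * ∑ j ∈ Finset.univ.erase i, φ (y i) * w (y j)
        ≤ φ (y i) / (w x + ∑ k, w (y k)) := by
      intro i
      rw [← Finset.mul_sum]
      by_cases hzero : φ (y i) = 0
      · simp [hzero, div_nonneg hS_nonneg hD_nonneg]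
      · have hmem : y i ∈ A ∩ K := by
          by_contra hmem
          exact hzero (Set.indicator_of_notMem hmem w)
        have hφeq : φ (y i) = w (y i) := Set.indicator_of_mem hmem w
        have hwyi : 0 < w (y i) :=
          lt_of_le_of_ne (hw_nonneg _) (fun h => hzero (by rw [hφeq, ← h]))
        have hSi_nonneg : 0 ≤ ∑ j ∈ Finset.univ.erase i, w (y j) :=
          Finset.sum_nonneg fun j _ => hw_nonneg _
        have hsplit : (∑ k, w (y k)) = w (y i) + ∑ j ∈ Finset.univ.erase i, w (y j) :=
          (Finset.add_sum_erase _ _ (Finset.mem_univ i)).symm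
        set Si := ∑ j ∈ Finset.univ.erase i, w (y j) with hSi_def
        set t : ℝ := 2 * W + Si with ht_def
        have hD_pos : 0 < w x + ∑ k, w (y k) := by
          rw [hsplit]
          have := hw_nonneg x
          linarith
        have hDt : w x + ∑ k, w (y k) ≤ t := by
          rw [hsplit]
          have h1 := hW x hx
          have h2 := hW (y i) hmem.2
          rw [ht_def]
          linarith
        have ht_pos : 0 < t := lt_of_lt_of_le hD_pos hDt
        have heq : a - b * Si = (2 * m - t) / m ^ 2 := by
          rw [ha_def, hb_def, ht_def, hW_def]
          field_simp
          ring
        have h1 : (2 * m - t) / m ^ 2 ≤ 1 / t := by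
          rw [div_le_div_iff₀ (by positivity) ht_pos]
          nlinarith [sq_nonneg (t - m)]
        have h2 : 1 / t ≤ 1 / (w x + ∑ k, w (y k)) := one_div_le_one_div_of_le hD_pos hDt
        calc a * φ (y i) - b * (φ (y i) * Si) = φ (y i) * (a - b * Si) := by ring
        _ ≤ φ (y i) * (1 / (w x + ∑ k, w (y k))) := by
            apply mul_le_mul_of_nonneg_left _ (hφ_nonneg _)
            rw [heq]
            exact h1.trans h2
        _ = φ (y i) / (w x + ∑ k, w (y k)) := mul_one_div _ _
    have hnum : ∑ i, φ (y i) ≤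
        w x * A.indicator (fun _ => (1 : ℝ)) x + ∑ i, w (y i) * A.indicator (fun _ => (1 : ℝ)) (y i) := by
      have h1 : ∀ i : Fin (N-1), φ (y i) ≤ w (y i) * A.indicator (fun _ => (1 : ℝ)) (y i) := by
        intro i
        by_cases h : y i ∈ A ∩ K
        · rw [hφ_def, Set.indicator_of_mem h, Set.indicator_of_mem h.1, mul_one]
        · rw [hφ_def, Set.indicator_of_notMem h]
          exact mul_nonneg (hw_nonneg _) (Set.indicator_nonneg (by intros; norm_num) _)
      calc ∑ i, φ (y i) ≤ ∑ i, w (y i) * A.indicator (fun _ => (1 : ℝ)) (y i) :=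
            Finset.sum_le_sum fun i _ => h1 i
      _ ≤ _ := le_add_of_nonneg_left
            (mul_nonneg (hw_nonneg x) (Set.indicator_nonneg (by intros; norm_num) _))
    calc g y ≤ ∑ i, φ (y i) / (w x + ∑ k, w (y k)) := Finset.sum_le_sum fun i _ => hterm i
    _ = (∑ i, φ (y i)) / (w x + ∑ k, w (y k)) := (Finset.sum_div _ _ _).symm
    _ ≤ _ := by
        rcases eq_or_lt_of_le hD_nonneg with hD | hD
        · rw [← hD]
          simp
        · exact (div_le_div_iff_of_pos_right hD).mpr hnum
  -- integrability and bounds for the integrand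
  have hF_meas : Measurable (fun y : Fin (N-1) → X =>
      (w x * A.indicator (fun _ => (1 : ℝ)) x + ∑ i, w (y i) * A.indicator (fun _ => (1 : ℝ)) (y i)) /
        (w x + ∑ i, w (y i))) := by
    apply Measurable.div
    · apply Measurable.add measurable_const
      exact Finset.measurable_sum _ (fun i _ =>
        ((hw_meas.comp (measurable_pi_apply i)).mul
          ((measurable_const.indicator hA).comp (measurable_pi_apply i))))
    · exact Measurable.add measurable_const
        (Finset.measurable_sum _ (fun i _ => hw_meas.comp (measurable_pi_apply i)))
  have hF_int : Integrable (fun y : Fin (N-1) → X =>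
      (w x * A.indicator (fun _ => (1 : ℝ)) x + ∑ i, w (y i) * A.indicator (fun _ => (1 : ℝ)) (y i)) /
        (w x + ∑ i, w (y i))) μ := by
    refine Integrable.mono' (integrable_const 1) hF_meas.aestronglyMeasurable (ae_of_all _ ?_)
    intro y
    have hnum_nonneg : 0 ≤ w x * A.indicator (fun _ => (1 : ℝ)) x +
        ∑ i, w (y i) * A.indicator (fun _ => (1 : ℝ)) (y i) := by
      apply add_nonneg
      · exact mul_nonneg (hw_nonneg x) (Set.indicator_nonneg (by intros; norm_num) _)
      · exact Finset.sum_nonneg (fun i _ =>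
          mul_nonneg (hw_nonneg _) (Set.indicator_nonneg (by intros; norm_num) _))
    have hden_nonneg : 0 ≤ w x + ∑ i, w (y i) :=
      add_nonneg (hw_nonneg x) (Finset.sum_nonneg (fun i _ => hw_nonneg _))
    rw [Real.norm_eq_abs, abs_of_nonneg (div_nonneg hnum_nonneg hden_nonneg)]
    apply div_le_one_of_le₀ _ hden_nonneg
    apply add_le_add
    · exact mul_le_of_le_one_right (hw_nonneg x) (Set.indicator_le_self' (by intros; norm_num) x)
    · exact Finset.sum_le_sum (fun i _ =>
        mul_le_of_le_one_right (hw_nonneg _) (Set.indicator_le_self' (by intros; norm_num) _))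
  have hmain : ∫ y, g y ∂μ ≤ isirP lam w N x A := by
    rw [isirP]
    exact integral_mono hg_int hF_int hpt
  -- final algebra
  have hfinal : ((N : ℝ) - 1) * (π K).toReal / (2 * wK + (N : ℝ) - 2) *
      ((π (A ∩ K)).toReal / (π K).toReal) = ∫ y, g y ∂μ := by
    rw [hgval, hπAK, ha_def, hb_def, hm_def, hW_def]
    have hπK' : (π K).toReal ≠ 0 := ne_of_gt hπK
    field_simp
    ring
  linarith [hmain]
end

section
/- (Quadratic growth of the gradient.) Let $U: \mathbb{R}^d \to \mathbb{R}$ be twice continuously differentiable with $\nabla U(0)=0$, $\|D^2 U(x)\| \le L$ for all $x$, and suppose there exist $m>0$, $K \ge 0$ such that $D^2U(x)\{y\}^{\otimes 2} \ge m$ for all $x$ with $\|x\| \ge K$ and all unit vectors $y$. Then for all $x \in \mathbb{R}^d$, $\langle \nabla U(x), x\rangle \ge (m/2)\|x\|^2 - \tilde{C}\,\mathbf{1}_{\{\|x\| \le \tilde{K}\}}$, where $\tilde{K} = 2K(1 + L/m)$ and $\tilde{C} = L\tilde{K}^2$. -/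
open scoped RealInnerProductSpace

lemma stmt_14_aux (L m K r g ind : ℝ) (hL : 0 ≤ L) (hm : 0 < m) (hK : 0 ≤ K) (hr : 0 ≤ r)
    (hA : -(L * r ^ 2) ≤ g) (hB : K < r → m * r ^ 2 - (m + L) * (K * r) ≤ g)
    (hml : r ≠ 0 → m ≤ L)
    (hind1 : r ≤ 2 * K * (1 + L / m) → ind = 1)
    (hind0 : ¬ r ≤ 2 * K * (1 + L / m) → ind = 0) :
    m / 2 * r ^ 2 - (L * (2 * K * (1 + L / m)) ^ 2) * ind ≤ g := by
  set Kt : ℝ := 2 * K * (1 + L / m) with hKt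
  have hid : m * Kt = 2 * K * (m + L) := by
    rw [hKt]; field_simp
  have h2K : 2 * K ≤ Kt := by nlinarith
  have hKt0 : 0 ≤ Kt := by linarith
  have hKtK : K ≤ Kt := by linarith
  by_cases hcase : r ≤ Kt
  · rw [hind1 hcase]
    rcases eq_or_ne r 0 with hr0 | hr0
    · subst hr0
      have h1 : (0:ℝ) ≤ L * Kt ^ 2 := by positivity
      nlinarith
    · have hml' := hml hr0
      have hrpos : 0 < r := lt_of_le_of_ne hr (Ne.symm hr0)
      by_cases hrK : r ≤ K
      · have hr2 : r ^ 2 ≤ K ^ 2 := by nlinarith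
        have hKt2 : 4 * K ^ 2 ≤ Kt ^ 2 := by nlinarith
        nlinarith [mul_le_mul_of_nonneg_left hr2 hL, mul_le_mul_of_nonneg_left hKt2 hL,
          sq_nonneg r]
      · push_neg at hrK
        have hBr := hB hrK
        -- (m+L)*(K*r) = (m/2) * Kt * r
        have h3 : 2 * ((m + L) * (K * r)) = (m * Kt) * r := by rw [hid]; ring
        nlinarith [mul_le_mul_of_nonneg_left hcase hm.le, sq_nonneg r, sq_nonneg (r - Kt),
          mul_nonneg (mul_nonneg hm.le hKt0) hr]
  · rw [hind0 hcase]
    push_neg at hcase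
    have hxK : K < r := lt_of_le_of_lt hKtK hcase
    have hBr := hB hxK
    have h3 : 2 * ((m + L) * (K * r)) = (m * Kt) * r := by rw [hid]; ring
    have h4 : (m * Kt) * r ≤ (m * r) * r :=
      mul_le_mul_of_nonneg_right (mul_le_mul_of_nonneg_left hcase.le hm.le) hr
    nlinarith

set_option maxHeartbeats 1000000 in
/-- Quadratic growth of `⟪∇U(x), x⟫` for a potential with bounded Hessian that is
strongly convex outside a ball. -/
theorem stmt_14 (d : ℕ) (U : EuclideanSpace ℝ (Fin d) → ℝ)
    (hU : ContDiff ℝ 2 U) (hgrad0 : gradient U 0 = 0)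
    (L : ℝ) (hL : 0 ≤ L)
    (hHessBdd : ∀ x, ‖fderiv ℝ (fun y => fderiv ℝ U y) x‖ ≤ L)
    (m : ℝ) (hm : 0 < m) (K : ℝ) (hK : 0 ≤ K)
    (hconv : ∀ x, K ≤ ‖x‖ → ∀ y : EuclideanSpace ℝ (Fin d), ‖y‖ = 1 →
      m ≤ fderiv ℝ (fun z => fderiv ℝ U z) x y y) :
    ∀ x : EuclideanSpace ℝ (Fin d),
      m / 2 * ‖x‖ ^ 2 -
          (L * (2 * K * (1 + L / m)) ^ 2) *
            Set.indicator {z : EuclideanSpace ℝ (Fin d) | ‖z‖ ≤ 2 * K * (1 + L / m)}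
              (fun _ => (1 : ℝ)) x ≤
        ⟪gradient U x, x⟫ := by
  intro x
  -- the Hessian
  set H := fderiv ℝ (fderiv ℝ U) with hH
  have hHbd : ∀ z, ‖H z‖ ≤ L := hHessBdd
  have hconv' : ∀ z, K ≤ ‖z‖ → ∀ y : EuclideanSpace ℝ (Fin d), ‖y‖ = 1 →
      m ≤ H z y y := hconv
  have hF : Differentiable ℝ (fderiv ℝ U) := by
    have : ContDiff ℝ 1 (fderiv ℝ U) := hU.fderiv_right (by norm_num)
    exact this.differentiable (by norm_num)
  -- the key function φ and its derivative
  have key : ∀ t : ℝ, HasDerivAt (fun s : ℝ => fderiv ℝ U (s • x) x)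
      (H (t • x) x x) t := by
    intro t
    have h1 : HasDerivAt (fun s : ℝ => s • x) x t := by
      simpa using (hasDerivAt_id t).smul_const x
    have h2 : HasDerivAt (fun s : ℝ => fderiv ℝ U (s • x)) (H (t • x) x) t :=
      ((hF (t • x)).hasFDerivAt.comp_hasDerivAt t h1)
    have h3 := h2.clm_apply (hasDerivAt_const t x)
    simpa using h3
  set φ : ℝ → ℝ := fun s : ℝ => fderiv ℝ U (s • x) x with hφ
  have hφdiff : Differentiable ℝ φ := fun t => (key t).differentiableAt
  have hf0 : fderiv ℝ U 0 = 0 := by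
    have := congrArg (InnerProductSpace.toDual ℝ (EuclideanSpace ℝ (Fin d))) hgrad0
    simpa [gradient] using this
  have hφ0 : φ 0 = 0 := by simp [hφ, hf0]
  have hval : ⟪gradient U x, x⟫ = fderiv ℝ U x x := InnerProductSpace.toDual_symm_apply
  have hφ1 : φ 1 = fderiv ℝ U x x := by simp [hφ]
  -- absolute bound on the Hessian quadratic form
  have hHabs : ∀ z : EuclideanSpace ℝ (Fin d), |H z x x| ≤ L * ‖x‖ ^ 2 := by
    intro z
    have h1 : ‖H z x x‖ ≤ ‖H z x‖ * ‖x‖ := (H z x).le_opNorm x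
    have h2 : ‖H z x‖ ≤ ‖H z‖ * ‖x‖ := (H z).le_opNorm x
    have h3 : ‖H z‖ ≤ L := hHbd z
    have hx : (0:ℝ) ≤ ‖x‖ := norm_nonneg x
    calc |H z x x| = ‖H z x x‖ := (Real.norm_eq_abs _).symm
      _ ≤ ‖H z x‖ * ‖x‖ := h1
      _ ≤ (‖H z‖ * ‖x‖) * ‖x‖ := mul_le_mul_of_nonneg_right h2 hx
      _ = ‖H z‖ * ‖x‖ ^ 2 := by ring
      _ ≤ L * ‖x‖ ^ 2 := mul_le_mul_of_nonneg_right h3 (by positivity)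
  have hderiv_low : ∀ t : ℝ, -(L * ‖x‖ ^ 2) ≤ deriv φ t := by
    intro t
    rw [(key t).deriv]
    have := hHabs (t • x)
    have := neg_abs_le (H (t • x) x x)
    linarith
  -- global lower bound valid for all x
  have hA : -(L * ‖x‖ ^ 2) ≤ fderiv ℝ U x x := by
    have := mul_sub_le_image_sub_of_le_deriv hφdiff hderiv_low (show (0:ℝ) ≤ 1 by norm_num)
    rw [hφ0] at this
    rw [← hφ1]
    linarith
  -- lower bound using strong convexity, for x ≠ 0
  have hmain : K < ‖x‖ → m * ‖x‖ ^ 2 - (m + L) * (K * ‖x‖) ≤ fderiv ℝ U x x := by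
    intro hxK
    have hxpos : (0:ℝ) < ‖x‖ := lt_of_le_of_lt hK hxK
    have hx0 : ‖x‖ ≠ 0 := hxpos.ne'
    set u : EuclideanSpace ℝ (Fin d) := ‖x‖⁻¹ • x with hu
    have hu1 : ‖u‖ = 1 := by
      rw [hu, norm_smul, norm_inv, norm_norm, inv_mul_cancel₀ hx0]
    have hxu : x = ‖x‖ • u := by
      rw [hu, smul_smul, mul_inv_cancel₀ hx0, one_smul]
    have hHlow : ∀ z : EuclideanSpace ℝ (Fin d), K ≤ ‖z‖ → m * ‖x‖ ^ 2 ≤ H z x x := by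
      intro z hz
      have hc : m ≤ H z u u := hconv' z hz u hu1
      have hform : H z x x = ‖x‖ ^ 2 * (H z u u) := by
        conv_lhs => rw [hxu]
        simp [map_smul, smul_eq_mul]
        ring
      rw [hform]
      nlinarith [sq_nonneg ‖x‖]
    set t₀ : ℝ := K / ‖x‖ with ht₀
    have ht₀0 : 0 ≤ t₀ := by positivity
    have ht₀1 : t₀ ≤ 1 := by
      rw [ht₀, div_le_one hxpos]; linarith
    have ht₀x : t₀ * ‖x‖ = K := div_mul_cancel₀ K hx0
    have h1 : -(L * ‖x‖ ^ 2) * (t₀ - 0) ≤ φ t₀ - φ 0 :=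
      mul_sub_le_image_sub_of_le_deriv hφdiff hderiv_low ht₀0
    have h2 : (m * ‖x‖ ^ 2) * (1 - t₀) ≤ φ 1 - φ t₀ := by
      refine (convex_Icc t₀ 1).mul_sub_le_image_sub_of_le_deriv
        hφdiff.continuous.continuousOn hφdiff.differentiableOn ?_
        t₀ (Set.mem_Icc.mpr ⟨le_rfl, ht₀1⟩)
        1 (Set.mem_Icc.mpr ⟨ht₀1, le_rfl⟩) ht₀1
      intro t ht
      rw [interior_Icc] at ht
      rw [(key t).deriv]
      apply hHlow
      have h5 : ‖t • x‖ = t * ‖x‖ := by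
        rw [norm_smul, Real.norm_eq_abs, abs_of_pos (lt_of_le_of_lt ht₀0 ht.1)]
      rw [h5, ← ht₀x]
      have := ht.1.le
      nlinarith
    rw [hφ0] at h1
    rw [← hφ1]
    have hxt : ‖x‖ ^ 2 * t₀ = K * ‖x‖ := by
      rw [ht₀]; field_simp
    nlinarith
  -- comparison m ≤ L, valid when x ≠ 0
  have hmL : x ≠ 0 → m ≤ L := by
    intro hx0
    have hxn : ‖x‖ ≠ 0 := by simpa using hx0
    set u : EuclideanSpace ℝ (Fin d) := ‖x‖⁻¹ • x with hu
    have hu1 : ‖u‖ = 1 := by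
      rw [hu, norm_smul, norm_inv, norm_norm, inv_mul_cancel₀ hxn]
    set z : EuclideanSpace ℝ (Fin d) := (K + 1) • u with hz
    have hzn : ‖z‖ = K + 1 := by
      rw [hz, norm_smul, Real.norm_eq_abs, abs_of_pos (by linarith), hu1, mul_one]
    have h1 : m ≤ H z u u := hconv' z (by rw [hzn]; linarith) u hu1
    have h2 : ‖H z u u‖ ≤ ‖H z u‖ * ‖u‖ := (H z u).le_opNorm u
    have h3 : ‖H z u‖ ≤ ‖H z‖ * ‖u‖ := (H z).le_opNorm u
    have h4 : ‖H z‖ ≤ L := hHbd z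
    rw [hu1, mul_one] at h2 h3
    have h5 : H z u u ≤ ‖H z u u‖ := le_abs_self _
    linarith
  rw [hval]
  refine stmt_14_aux L m K ‖x‖ _ _ hL hm hK (norm_nonneg x) hA hmain ?_ ?_ ?_
  · intro h
    exact hmL (norm_ne_zero_iff.mp h)
  · intro h
    exact Set.indicator_of_mem
      (show x ∈ {z : EuclideanSpace ℝ (Fin d) | ‖z‖ ≤ 2 * K * (1 + L / m)} from h) _
  · intro h
    exact Set.indicator_of_notMem
      (show x ∉ {z : EuclideanSpace ℝ (Fin d) | ‖z‖ ≤ 2 * K * (1 + L / m)} from h) _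
end
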